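/- arXiv:2211.11245 — 7 statements merged into one kernel-verified Lean document; each statement's English description precedes it below -/
import Mathlib

section
/- Let a ≥ 0 and let φ : ℝ → ℝ be 1-periodic, continuous, positive, and satisfy φ(x) ≤ e^{a|x−y|}·φ(y) for all x, y ∈ ℝ. Then Pφ satisfies (Pφ)(x) ≤ e^{(a/2)|x−y|}·(Pφ)(y) for all x, y ∈ ℝ; that is, the transfer operator of the doubling map maps the cone V_a into the cone V_{a/2}. -/
/-- The transfer operator of the doubling map acting on 1-periodic functions. -/
noncomputable def Pop (ψ : ℝ → ℝ) : ℝ → ℝ :=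
  fun x => (1/2) * ψ (x/2) + (1/2) * ψ ((x+1)/2)

/-- The transfer operator of the doubling map sends the cone `V_a` of positive, continuous,
1-periodic functions with `φ x ≤ e^{a|x-y|} φ y` into the cone `V_{a/2}`. -/
theorem stmt1 (a : ℝ) (ha : 0 ≤ a) (φ : ℝ → ℝ)
    (hper : ∀ x, φ (x + 1) = φ x) (hcont : Continuous φ) (hpos : ∀ x, 0 < φ x)
    (hcone : ∀ x y, φ x ≤ Real.exp (a * |x - y|) * φ y) :
    ∀ x y, Pop φ x ≤ Real.exp ((a / 2) * |x - y|) * Pop φ y := by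
  intro x y
  have habs : |x/2 - y/2| = |x - y| / 2 := by
    rw [show x/2 - y/2 = (x - y)/2 by ring, abs_div]
    norm_num
  have habs2 : |(x+1)/2 - (y+1)/2| = |x - y| / 2 := by
    rw [show (x+1)/2 - (y+1)/2 = (x - y)/2 by ring, abs_div]
    norm_num
  have h1 : φ (x/2) ≤ Real.exp ((a/2) * |x - y|) * φ (y/2) := by
    have := hcone (x/2) (y/2)
    rwa [habs, show a * (|x - y|/2) = (a/2) * |x - y| by ring] at this
  have h2 : φ ((x+1)/2) ≤ Real.exp ((a/2) * |x - y|) * φ ((y+1)/2) := by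
    have := hcone ((x+1)/2) ((y+1)/2)
    rwa [habs2, show a * (|x - y|/2) = (a/2) * |x - y| by ring] at this
  simp only [Pop]
  nlinarith [Real.exp_pos ((a/2) * |x - y|)]
end

section
/- There exist ε₀ > 0 and C ≥ 0, depending only on h, such that for every ε with |ε| ≤ ε₀, every L ≥ 0, and every φ ∈ B_L: the map g_{ε,φ} is a strictly increasing bijection of ℝ, and the function L_{ε,φ}φ := (φ / g_{ε,φ}') ∘ g_{ε,φ}^{-1} is Lipschitz with Lipschitz constant at most (1 + C|ε|)·(L + C|ε|). -/
open MeasureTheory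

/-- The coupled map `g_{ε,φ}(x) = x + ε ∫₀¹ h(x,y) φ(y) dy`. -/
noncomputable def gmap (h : ℝ → ℝ → ℝ) (ε : ℝ) (φ : ℝ → ℝ) : ℝ → ℝ :=
  fun x => x + ε * ∫ y in (0:ℝ)..1, h x y * φ y

/-- The transfer operator of `g_{ε,φ}` applied to `u`: `(u / g') ∘ g⁻¹`. -/
noncomputable def Lop (h : ℝ → ℝ → ℝ) (ε : ℝ) (φ u : ℝ → ℝ) : ℝ → ℝ :=
  fun x => u (Function.invFun (gmap h ε φ) x) /
    deriv (gmap h ε φ) (Function.invFun (gmap h ε φ) x)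

/-- `h` is 1-periodic in each variable. -/
def periodicH (h : ℝ → ℝ → ℝ) : Prop :=
  (∀ x y, h (x+1) y = h x y) ∧ (∀ x y, h x (y+1) = h x y)

/-- `B_L`: 1-periodic, nonnegative, `L`-Lipschitz densities with `∫₀¹ φ = 1`. -/
def memB (L : ℝ) (φ : ℝ → ℝ) : Prop :=
  (∀ x, φ (x+1) = φ x) ∧ (∀ x, 0 ≤ φ x) ∧
  (∀ x y, |φ x - φ y| ≤ L * |x - y|) ∧ (∫ x in (0:ℝ)..1, φ x) = 1

open Set
lemma fderiv_translate {E F : Type*} [NormedAddCommGroup E] [NormedSpace ℝ E]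
    [NormedAddCommGroup F] [NormedSpace ℝ F] {f : E → F} (hf : Differentiable ℝ f) (v : E)
    (hp : ∀ p, f (p + v) = f p) (p : E) : fderiv ℝ f (p + v) = fderiv ℝ f p := by
  have h1 : HasFDerivAt (fun q : E => q + v) (ContinuousLinearMap.id ℝ E) p :=
    (hasFDerivAt_id p).add_const v
  have h2 := ((hf (p + v)).hasFDerivAt).comp p h1
  have h3 : (f ∘ fun q : E => q + v) = f := funext fun q => hp q
  rw [h3, ContinuousLinearMap.comp_id] at h2
  exact (h2.fderiv).symm

lemma bound_of_periodic {f : ℝ × ℝ → ℝ} (hf : Continuous f)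
    (h1 : ∀ x y, f (x + 1, y) = f (x, y)) (h2 : ∀ x y, f (x, y + 1) = f (x, y)) :
    ∃ M, 0 ≤ M ∧ ∀ x y, |f (x, y)| ≤ M := by
  obtain ⟨M, hM⟩ := (isCompact_Icc.prod isCompact_Icc :
      IsCompact (Icc (0:ℝ) 1 ×ˢ Icc (0:ℝ) 1)).exists_bound_of_continuousOn hf.continuousOn
  refine ⟨max M 0, le_max_right _ _, fun x y => ?_⟩
  have per1 : ∀ y x, f (x, y) = f (Int.fract x, y) := by
    intro y x
    have hp : Function.Periodic (fun x => f (x, y)) 1 := fun x => h1 x y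
    have h5 : Int.fract x = x - ⌊x⌋ := rfl
    have := hp.sub_int_mul_eq (x := x) ⌊x⌋
    simp only [mul_one] at this
    rw [h5]; exact this.symm
  have per2 : ∀ x y, f (x, y) = f (x, Int.fract y) := by
    intro x y
    have hp : Function.Periodic (fun y => f (x, y)) 1 := fun y => h2 x y
    have h5 : Int.fract y = y - ⌊y⌋ := rfl
    have := hp.sub_int_mul_eq (x := y) ⌊y⌋
    simp only [mul_one] at this
    rw [h5]; exact this.symm
  have heq : f (x, y) = f (Int.fract x, Int.fract y) := by rw [per1 y x, per2]
  rw [heq]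
  have hmem : (Int.fract x, Int.fract y) ∈ Icc (0:ℝ) 1 ×ˢ Icc (0:ℝ) 1 := by
    constructor <;> exact ⟨Int.fract_nonneg _, le_of_lt (Int.fract_lt_one _)⟩
  calc |f (Int.fract x, Int.fract y)| ≤ M := by
        simpa [Real.norm_eq_abs] using hM _ hmem
    _ ≤ max M 0 := le_max_left _ _

lemma integral_bound_aux {f φ : ℝ → ℝ} {c : ℝ} (hf : Continuous f) (hφc : Continuous φ)
    (hφ0 : ∀ y, 0 ≤ φ y) (hφ1 : (∫ y in (0:ℝ)..1, φ y) = 1) (hb : ∀ y, |f y| ≤ c) :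
    |∫ y in (0:ℝ)..1, f y * φ y| ≤ c := by
  have h1 : |∫ y in (0:ℝ)..1, f y * φ y| ≤ ∫ y in (0:ℝ)..1, |f y * φ y| :=
    intervalIntegral.abs_integral_le_integral_abs zero_le_one
  have h2 : (∫ y in (0:ℝ)..1, |f y * φ y|) ≤ ∫ y in (0:ℝ)..1, c * φ y := by
    apply intervalIntegral.integral_mono_on zero_le_one
      ((hf.mul hφc).abs.intervalIntegrable _ _) ((continuous_const.mul hφc).intervalIntegrable _ _)
    intro y _
    show |f y * φ y| ≤ c * φ y
    rw [abs_mul, abs_of_nonneg (hφ0 y)]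
    exact mul_le_mul_of_nonneg_right (hb y) (hφ0 y)
  have h3 : (∫ y in (0:ℝ)..1, c * φ y) = c := by
    rw [intervalIntegral.integral_const_mul, hφ1, mul_one]
  linarith

set_option maxHeartbeats 1000000 in
/-- For small `ε`, `g_{ε,φ}` is a strictly increasing bijection of `ℝ` and the transferred
density `L_{ε,φ}φ` is Lipschitz with constant `(1 + C|ε|)(L + C|ε|)`. -/
theorem stmt2 (h : ℝ → ℝ → ℝ) (hC2 : ContDiff ℝ 2 (Function.uncurry h))
    (hper : periodicH h) :
    ∃ ε₀ > (0:ℝ), ∃ C ≥ (0:ℝ), ∀ ε : ℝ, |ε| ≤ ε₀ → ∀ L : ℝ, 0 ≤ L → ∀ φ : ℝ → ℝ, memB L φ →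
      StrictMono (gmap h ε φ) ∧ Function.Bijective (gmap h ε φ) ∧
      ∀ x y, |Lop h ε φ φ x - Lop h ε φ φ y| ≤ (1 + C * |ε|) * (L + C * |ε|) * |x - y| := by
  classical
  obtain ⟨hper1, hper2⟩ := hper
  set H : ℝ × ℝ → ℝ := Function.uncurry h with hHdef
  have hHc : Continuous H := hC2.continuous
  have hHdiff : Differentiable ℝ H := hC2.differentiable (by norm_num)
  have hC1 : ContDiff ℝ 1 (fderiv ℝ H) := hC2.fderiv_right (by norm_num)
  set Hd : ℝ × ℝ → ℝ := fun p => fderiv ℝ H p (1, 0) with hHddef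
  have hHdc : Continuous Hd := hC1.continuous.clm_apply continuous_const
  have hHdCD : ContDiff ℝ 1 Hd := hC1.clm_apply contDiff_const
  have hHddiff : Differentiable ℝ Hd := hHdCD.differentiable (by norm_num)
  set Hdd : ℝ × ℝ → ℝ := fun p => fderiv ℝ Hd p (1, 0) with hHdddef
  have hHddc : Continuous Hdd :=
    ((hHdCD.fderiv_right (m := 0) (by norm_num)).continuous).clm_apply continuous_const
  -- periodicity
  have hHper1 : ∀ p : ℝ × ℝ, H (p + (1, 0)) = H p := by
    rintro ⟨x, y⟩
    simp only [Prod.mk_add_mk, add_zero]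
    exact hper1 x y
  have hHper2 : ∀ p : ℝ × ℝ, H (p + (0, 1)) = H p := by
    rintro ⟨x, y⟩
    simp only [Prod.mk_add_mk, add_zero]
    exact hper2 x y
  have hfdper1 : ∀ p, fderiv ℝ H (p + (1, 0)) = fderiv ℝ H p :=
    fderiv_translate hHdiff _ hHper1
  have hfdper2 : ∀ p, fderiv ℝ H (p + (0, 1)) = fderiv ℝ H p :=
    fderiv_translate hHdiff _ hHper2
  have hHdper1 : ∀ p : ℝ × ℝ, Hd (p + (1, 0)) = Hd p := fun p => by
    show fderiv ℝ H (p + (1, 0)) (1, 0) = fderiv ℝ H p (1, 0)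
    rw [hfdper1 p]
  have hHdper2 : ∀ p : ℝ × ℝ, Hd (p + (0, 1)) = Hd p := fun p => by
    show fderiv ℝ H (p + (0, 1)) (1, 0) = fderiv ℝ H p (1, 0)
    rw [hfdper2 p]
  have hHddper1 : ∀ p : ℝ × ℝ, Hdd (p + (1, 0)) = Hdd p := fun p => by
    show fderiv ℝ Hd (p + (1, 0)) (1, 0) = fderiv ℝ Hd p (1, 0)
    rw [fderiv_translate hHddiff _ hHdper1 p]
  have hHddper2 : ∀ p : ℝ × ℝ, Hdd (p + (0, 1)) = Hdd p := fun p => by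
    show fderiv ℝ Hd (p + (0, 1)) (1, 0) = fderiv ℝ Hd p (1, 0)
    rw [fderiv_translate hHddiff _ hHdper2 p]
  -- bounds
  obtain ⟨M₀, hM₀0, hM₀⟩ := bound_of_periodic hHc
    (fun x y => by simpa using hHper1 (x, y)) (fun x y => by simpa using hHper2 (x, y))
  obtain ⟨M₁, hM₁0, hM₁⟩ := bound_of_periodic hHdc
    (fun x y => by simpa using hHdper1 (x, y)) (fun x y => by simpa using hHdper2 (x, y))
  obtain ⟨M₂, hM₂0, hM₂⟩ := bound_of_periodic hHddc
    (fun x y => by simpa using hHddper1 (x, y)) (fun x y => by simpa using hHddper2 (x, y))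
  -- section derivatives
  have hsec1 : ∀ (y x : ℝ), HasDerivAt (fun x => h x y) (Hd (x, y)) x := by
    intro y x
    have hline : HasDerivAt (fun t : ℝ => (t, y)) ((1:ℝ), (0:ℝ)) x :=
      (hasDerivAt_id x).prodMk (hasDerivAt_const x y)
    exact (hHdiff (x, y)).hasFDerivAt.comp_hasDerivAt x hline
  have hsec2 : ∀ (y x : ℝ), HasDerivAt (fun x => Hd (x, y)) (Hdd (x, y)) x := by
    intro y x
    have hline : HasDerivAt (fun t : ℝ => (t, y)) ((1:ℝ), (0:ℝ)) x :=
      (hasDerivAt_id x).prodMk (hasDerivAt_const x y)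
    exact (hHddiff (x, y)).hasFDerivAt.comp_hasDerivAt x hline
  -- section Lipschitz
  have sLip1 : ∀ (y u v : ℝ), |h u y - h v y| ≤ M₁ * |u - v| := by
    intro y u v
    have := convex_univ.norm_image_sub_le_of_norm_deriv_le (f := fun x => h x y) (C := M₁)
      (fun x _ => (hsec1 y x).differentiableAt)
      (fun x _ => by rw [(hsec1 y x).deriv]; simpa [Real.norm_eq_abs] using hM₁ x y)
      (Set.mem_univ v) (Set.mem_univ u)
    simpa [Real.norm_eq_abs] using this
  have sLip2 : ∀ (y u v : ℝ), |Hd (u, y) - Hd (v, y)| ≤ M₂ * |u - v| := by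
    intro y u v
    have := convex_univ.norm_image_sub_le_of_norm_deriv_le (f := fun x => Hd (x, y)) (C := M₂)
      (fun x _ => (hsec2 y x).differentiableAt)
      (fun x _ => by rw [(hsec2 y x).deriv]; simpa [Real.norm_eq_abs] using hM₂ x y)
      (Set.mem_univ v) (Set.mem_univ u)
    simpa [Real.norm_eq_abs] using this
  refine ⟨1 / (2 * (M₁ + 1)), by positivity, 6 * M₁ + 8 * M₂, by linarith, ?_⟩
  intro ε hε L hL φ hφ
  obtain ⟨hφper, hφ0, hφlip, hφint⟩ := hφ
  have hφc : Continuous φ := by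
    have : LipschitzWith (Real.toNNReal L) φ := LipschitzWith.of_dist_le_mul (fun x y => by
      rw [Real.dist_eq, Real.dist_eq, Real.coe_toNNReal L hL]; exact hφlip x y)
    exact this.continuous
  have htM : |ε| * M₁ ≤ 1 / 2 := by
    rw [le_div_iff₀ (by positivity : (0:ℝ) < 2 * (M₁ + 1))] at hε
    nlinarith [abs_nonneg ε]
  -- φ is bounded by 1 + L
  have hφub : ∀ x, φ x ≤ 1 + L := by
    obtain ⟨x₀, hx₀, hmin⟩ := isCompact_Icc.exists_isMinOn (⟨0, by norm_num⟩ :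
      (Icc (0:ℝ) 1).Nonempty) hφc.continuousOn
    have hx₀le : φ x₀ ≤ 1 := by
      have h1 : (∫ y in (0:ℝ)..1, φ x₀) ≤ ∫ y in (0:ℝ)..1, φ y :=
        intervalIntegral.integral_mono_on zero_le_one (intervalIntegrable_const)
          (hφc.intervalIntegrable _ _) (fun y hy => hmin hy)
      rw [hφint] at h1
      simpa using h1
    intro x
    have hper' : φ x = φ (Int.fract x) := by
      have hp : Function.Periodic φ 1 := fun x => hφper x
      have h5 : Int.fract x = x - ⌊x⌋ := rfl
      have := hp.sub_int_mul_eq (x := x) ⌊x⌋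
      simp only [mul_one] at this
      rw [h5, this]
    have hfr : |Int.fract x - x₀| ≤ 1 := by
      have h1 := Int.fract_nonneg x
      have h2 := le_of_lt (Int.fract_lt_one x)
      rw [abs_le]
      constructor <;> [linarith [hx₀.2]; linarith [hx₀.1]]
    have := hφlip (Int.fract x) x₀
    have h2 : L * |Int.fract x - x₀| ≤ L := by nlinarith
    rw [hper']
    have := abs_le.1 ((hφlip (Int.fract x) x₀).trans h2)
    linarith [this.2]
  set ψ : ℝ → ℝ := fun x => ∫ y in (0:ℝ)..1, h x y * φ y with hψdef
  set ψ' : ℝ → ℝ := fun x => ∫ y in (0:ℝ)..1, Hd (x, y) * φ y with hψ'def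
  have hcontx : ∀ x : ℝ, Continuous fun y => h x y := fun x => hHc.comp (Continuous.prodMk_right x)
  have hcontdx : ∀ x : ℝ, Continuous fun y => Hd (x, y) := fun x => hHdc.comp (Continuous.prodMk_right x)
  -- derivative of ψ
  have hψderiv : ∀ x : ℝ, HasDerivAt ψ (ψ' x) x := by
    intro x₀
    have key := intervalIntegral.hasDerivAt_integral_of_dominated_loc_of_deriv_le
      (F := fun x t => h x t * φ t) (F' := fun x t => Hd (x, t) * φ t) (x₀ := x₀)
      (bound := fun t => M₁ * φ t) (μ := volume) (a := 0) (b := 1) (s := Set.univ) Filter.univ_mem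
      (Filter.Eventually.of_forall fun x => ((hcontx x).mul hφc).aestronglyMeasurable)
      (((hcontx x₀).mul hφc).intervalIntegrable _ _)
      (((hcontdx x₀).mul hφc).aestronglyMeasurable)
      (Filter.Eventually.of_forall fun t _ x _ => by
        rw [Real.norm_eq_abs, abs_mul, abs_of_nonneg (hφ0 t)]
        exact mul_le_mul_of_nonneg_right (hM₁ x t) (hφ0 t))
      ((continuous_const.mul hφc).intervalIntegrable _ _)
      (Filter.Eventually.of_forall fun t _ x _ => (hsec1 t x).mul_const (φ t))
    exact key.2
  have hψbound : ∀ x, |ψ x| ≤ M₀ := fun x =>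
    integral_bound_aux (hcontx x) hφc hφ0 hφint (fun y => hM₀ x y)
  have hψ'bound : ∀ x, |ψ' x| ≤ M₁ := fun x =>
    integral_bound_aux (hcontdx x) hφc hφ0 hφint (fun y => hM₁ x y)
  have hψlip : ∀ u v : ℝ, |ψ u - ψ v| ≤ M₁ * |u - v| := by
    intro u v
    have heq : (∫ y in (0:ℝ)..1, (h u y - h v y) * φ y) = ψ u - ψ v := by
      rw [show (fun y => (h u y - h v y) * φ y) = fun y => h u y * φ y - h v y * φ y from
        funext fun y => by ring]
      exact intervalIntegral.integral_sub (((hcontx u).mul hφc).intervalIntegrable _ _)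
        (((hcontx v).mul hφc).intervalIntegrable _ _)
    rw [← heq]
    exact integral_bound_aux ((hcontx u).sub (hcontx v)) hφc hφ0 hφint (fun y => sLip1 y u v)
  have hψ'lip : ∀ u v : ℝ, |ψ' u - ψ' v| ≤ M₂ * |u - v| := by
    intro u v
    have heq : (∫ y in (0:ℝ)..1, (Hd (u, y) - Hd (v, y)) * φ y) = ψ' u - ψ' v := by
      rw [show (fun y => (Hd (u, y) - Hd (v, y)) * φ y) =
          fun y => Hd (u, y) * φ y - Hd (v, y) * φ y from funext fun y => by ring]
      exact intervalIntegral.integral_sub (((hcontdx u).mul hφc).intervalIntegrable _ _)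
        (((hcontdx v).mul hφc).intervalIntegrable _ _)
    rw [← heq]
    exact integral_bound_aux ((hcontdx u).sub (hcontdx v)) hφc hφ0 hφint (fun y => sLip2 y u v)
  set g := gmap h ε φ with hg
  have hgder : ∀ x, HasDerivAt g (1 + ε * ψ' x) x := fun x =>
    (hasDerivAt_id x).add ((hψderiv x).const_mul ε)
  have hDlb : ∀ x, 1 - |ε| * M₁ ≤ 1 + ε * ψ' x := by
    intro x
    have h1 : |ε * ψ' x| ≤ |ε| * M₁ := by
      rw [abs_mul]; exact mul_le_mul_of_nonneg_left (hψ'bound x) (abs_nonneg ε)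
    linarith [(abs_le.1 h1).1]
  have hDub : ∀ x, 1 + ε * ψ' x ≤ 1 + |ε| * M₁ := by
    intro x
    have h1 : |ε * ψ' x| ≤ |ε| * M₁ := by
      rw [abs_mul]; exact mul_le_mul_of_nonneg_left (hψ'bound x) (abs_nonneg ε)
    linarith [(abs_le.1 h1).2]
  have hDpos : ∀ x, (1:ℝ)/2 ≤ 1 + ε * ψ' x := fun x => by linarith [hDlb x, htM]
  have hderiv_eq : ∀ x, deriv g x = 1 + ε * ψ' x := fun x => (hgder x).deriv
  have hmono : StrictMono g :=
    strictMono_of_deriv_pos (fun x => by rw [hderiv_eq x]; linarith [hDpos x])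
  have hgc : Continuous g := Differentiable.continuous (fun x => (hgder x).differentiableAt)
  have hsurj : Function.Surjective g := by
    intro z
    have hc0 : (0:ℝ) ≤ |ε| * M₀ := mul_nonneg (abs_nonneg ε) hM₀0
    set c := |ε| * M₀ + 1 with hcdef
    have hbd : ∀ u : ℝ, |ε * ψ u| ≤ |ε| * M₀ := fun u => by
      rw [abs_mul]; exact mul_le_mul_of_nonneg_left (hψbound u) (abs_nonneg ε)
    have h1 : g (z - c) ≤ z := by
      have := (abs_le.1 (hbd (z - c))).2
      show z - c + ε * ψ (z - c) ≤ z
      rw [hcdef]; linarith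
    have h2 : z ≤ g (z + c) := by
      have := (abs_le.1 (hbd (z + c))).1
      show z ≤ z + c + ε * ψ (z + c)
      rw [hcdef]; linarith
    obtain ⟨w, _, hw⟩ := intermediate_value_Icc (by linarith : z - c ≤ z + c)
      hgc.continuousOn ⟨h1, h2⟩
    exact ⟨w, hw⟩
  refine ⟨hmono, ⟨hmono.injective, hsurj⟩, ?_⟩
  intro x y
  set a := Function.invFun g x with ha
  set b := Function.invFun g y with hb
  have hga : g a = x := Function.rightInverse_invFun hsurj x
  have hgb : g b = y := Function.rightInverse_invFun hsurj y
  have hLx : Lop h ε φ φ x = φ a / (1 + ε * ψ' a) := by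
    show φ (Function.invFun g x) / deriv g (Function.invFun g x) = _
    rw [← ha, hderiv_eq]
  have hLy : Lop h ε φ φ y = φ b / (1 + ε * ψ' b) := by
    show φ (Function.invFun g y) / deriv g (Function.invFun g y) = _
    rw [← hb, hderiv_eq]
  clear_value a b
  rw [hLx, hLy]
  set u := 1 + ε * ψ' a with hudef
  set v := 1 + ε * ψ' b with hvdef
  have hu2 : (1:ℝ)/2 ≤ u := hDpos a
  have hv2 : (1:ℝ)/2 ≤ v := hDpos b
  have hupos : 0 < u := by linarith
  have hvpos : 0 < v := by linarith
  have hs0 : 0 ≤ |ε| * M₁ := mul_nonneg (abs_nonneg ε) hM₁0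
  -- inverse map is (1 + 2M₁|ε|)-Lipschitz
  have habx : |a - b| ≤ (1 + 2 * M₁ * |ε|) * |x - y| := by
    have h3 : a - b = (g a - g b) - ε * (ψ a - ψ b) := by
      show a - b = (a + ε * ψ a - (b + ε * ψ b)) - ε * (ψ a - ψ b)
      ring
    have h2 : |ε * (ψ a - ψ b)| ≤ |ε| * M₁ * |a - b| := by
      rw [abs_mul, mul_assoc]
      exact mul_le_mul_of_nonneg_left (hψlip a b) (abs_nonneg ε)
    have h1 : |a - b| ≤ |x - y| + |ε| * M₁ * |a - b| := by
      calc |a - b| = |(g a - g b) - ε * (ψ a - ψ b)| := by rw [← h3]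
        _ ≤ |g a - g b| + |ε * (ψ a - ψ b)| := abs_sub _ _
        _ ≤ |x - y| + |ε| * M₁ * |a - b| := by rw [hga, hgb]; linarith
    nlinarith [abs_nonneg (a - b), abs_nonneg (x - y), htM,
      mul_le_mul_of_nonneg_left h1 (by linarith : (0:ℝ) ≤ 1 + 2 * M₁ * |ε|),
      mul_nonneg (mul_nonneg (abs_nonneg (a - b)) hs0)
        (by linarith : (0:ℝ) ≤ 1 - 2 * (|ε| * M₁))]
  have huinv : 1 / u ≤ 1 + 2 * M₁ * |ε| := by
    rw [div_le_iff₀ hupos]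
    nlinarith [hDlb a, htM, hs0,
      mul_le_mul_of_nonneg_left (hDlb a) (by linarith : (0:ℝ) ≤ 1 + 2 * M₁ * |ε|),
      mul_nonneg hs0 (by linarith : (0:ℝ) ≤ 1 - 2 * (|ε| * M₁))]
  have hvu : |v - u| ≤ |ε| * M₂ * |a - b| := by
    have hvu1 : v - u = ε * (ψ' b - ψ' a) := by rw [hudef, hvdef]; ring
    rw [hvu1, abs_mul]
    calc |ε| * |ψ' b - ψ' a| ≤ |ε| * (M₂ * |b - a|) :=
          mul_le_mul_of_nonneg_left (hψ'lip b a) (abs_nonneg ε)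
      _ = |ε| * M₂ * |a - b| := by rw [abs_sub_comm b a]; ring
  clear_value u v
  have hune : u ≠ 0 := ne_of_gt hupos
  have hvne : v ≠ 0 := ne_of_gt hvpos
  have hsplit : φ a / u - φ b / v = (φ a - φ b) / u + φ b * ((v - u) / (u * v)) := by
    field_simp
    ring
  have hmain : |φ a / u - φ b / v| ≤
      (L * (1 + 2 * M₁ * |ε|) + 4 * M₂ * (1 + L) * |ε|) * |a - b| := by
    have e1 : |(φ a - φ b) / u| ≤ L * |a - b| * (1 + 2 * M₁ * |ε|) := by
      have e1a := mul_le_mul (hφlip a b) huinv (by positivity) (mul_nonneg hL (abs_nonneg _))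
      calc |(φ a - φ b) / u| = |φ a - φ b| * (1 / u) := by
            rw [abs_div, abs_of_pos hupos]; ring
        _ ≤ L * |a - b| * (1 + 2 * M₁ * |ε|) := e1a
    have e2 : |φ b * ((v - u) / (u * v))| ≤ (1 + L) * (4 * (|ε| * M₂ * |a - b|)) := by
      rw [abs_mul, abs_div, abs_of_nonneg (hφ0 b), abs_of_pos (mul_pos hupos hvpos)]
      have e2a : |v - u| / (u * v) ≤ 4 * (|ε| * M₂ * |a - b|) := by
        rw [div_le_iff₀ (mul_pos hupos hvpos)]
        have huv : (1:ℝ)/4 ≤ u * v := by nlinarith [hu2, hv2]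
        have hW : 0 ≤ |ε| * M₂ * |a - b| :=
          mul_nonneg (mul_nonneg (abs_nonneg ε) hM₂0) (abs_nonneg _)
        nlinarith [hvu, mul_nonneg hW (by linarith : (0:ℝ) ≤ 4 * (u * v) - 1)]
      exact mul_le_mul (hφub b) e2a (by positivity) (by linarith)
    calc |φ a / u - φ b / v| ≤ |(φ a - φ b) / u| + |φ b * ((v - u) / (u * v))| := by
          rw [hsplit]; exact abs_add_le _ _
      _ ≤ (L * (1 + 2 * M₁ * |ε|) + 4 * M₂ * (1 + L) * |ε|) * |a - b| := by nlinarith [e1, e2]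
  have hK1 : 0 ≤ L * (1 + 2 * M₁ * |ε|) + 4 * M₂ * (1 + L) * |ε| := by
    have := mul_nonneg (mul_nonneg (abs_nonneg ε) hM₁0) hL
    nlinarith [mul_nonneg hM₂0 (abs_nonneg ε), mul_nonneg (mul_nonneg hM₂0 hL) (abs_nonneg ε)]
  have hcoef : (L * (1 + 2 * M₁ * |ε|) + 4 * M₂ * (1 + L) * |ε|) * (1 + 2 * M₁ * |ε|) ≤
      (1 + (6 * M₁ + 8 * M₂) * |ε|) * (L + (6 * M₁ + 8 * M₂) * |ε|) := by
    nlinarith [htM, hL, hM₁0, hM₂0, abs_nonneg ε,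
      mul_nonneg (mul_nonneg hM₁0 (abs_nonneg ε)) hL,
      mul_nonneg hM₁0 (abs_nonneg ε),
      sq_nonneg ((6 * M₁ + 8 * M₂) * |ε|),
      mul_nonneg (by linarith : (0:ℝ) ≤ 1/2 - |ε| * M₁)
        (mul_nonneg (mul_nonneg hM₁0 hL) (abs_nonneg ε)),
      mul_nonneg (by linarith : (0:ℝ) ≤ 1/2 - |ε| * M₁)
        (mul_nonneg hM₂0 (abs_nonneg ε)),
      mul_nonneg (by linarith : (0:ℝ) ≤ 1/2 - |ε| * M₁)
        (mul_nonneg (mul_nonneg hM₂0 hL) (abs_nonneg ε))]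
  calc |φ a / u - φ b / v| ≤
        (L * (1 + 2 * M₁ * |ε|) + 4 * M₂ * (1 + L) * |ε|) * |a - b| := hmain
    _ ≤ (L * (1 + 2 * M₁ * |ε|) + 4 * M₂ * (1 + L) * |ε|) *
        ((1 + 2 * M₁ * |ε|) * |x - y|) := mul_le_mul_of_nonneg_left habx hK1
    _ = ((L * (1 + 2 * M₁ * |ε|) + 4 * M₂ * (1 + L) * |ε|) * (1 + 2 * M₁ * |ε|)) * |x - y| := by
        ring
    _ ≤ (1 + (6 * M₁ + 8 * M₂) * |ε|) * (L + (6 * M₁ + 8 * M₂) * |ε|) * |x - y| :=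
        mul_le_mul_of_nonneg_right hcoef (abs_nonneg _)
end

section
/- There exist ε₀ > 0 and C ≥ 0, depending only on h, such that for every ε with |ε| < ε₀ and every L ≥ C|ε|, the self-consistent transfer operator T_ε maps B_L into itself: for every φ ∈ B_L, the function T_ε φ = P(L_{ε,φ}φ) is 1-periodic, nonnegative, Lipschitz with constant L, and satisfies ∫₀¹ T_ε φ = 1. -/
open MeasureTheory
open Function

/-- The self-consistent transfer operator `T_ε φ = P (L_{ε,φ} φ)`. -/
noncomputable def Tsc (h : ℝ → ℝ → ℝ) (ε : ℝ) (φ : ℝ → ℝ) : ℝ → ℝ :=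
  Pop (Lop h ε φ φ)

lemma aux_fract_eq {E : Type*} [NormedAddCommGroup E] (f : ℝ → E)
    (hp : ∀ x, f (x+1) = f x) (x : ℝ) : f (Int.fract x) = f x := by
  have hper : Function.Periodic f 1 := hp
  have h2 := hper.sub_int_mul_eq (x := x) ⌊x⌋
  rw [mul_one] at h2
  rw [Int.fract]
  exact h2

lemma aux_bdd {E : Type*} [NormedAddCommGroup E] (F : ℝ × ℝ → E)
    (hc : Continuous F) (h1 : ∀ x y, F (x+1, y) = F (x, y))
    (h2 : ∀ x y, F (x, y+1) = F (x, y)) :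
    ∃ M : ℝ, 0 ≤ M ∧ ∀ p, ‖F p‖ ≤ M := by
  obtain ⟨C, hC⟩ := (isCompact_Icc.prod isCompact_Icc :
      IsCompact (Set.Icc (0:ℝ) 1 ×ˢ Set.Icc (0:ℝ) 1)).exists_bound_of_continuousOn
      hc.continuousOn
  refine ⟨max C 0, le_max_right _ _, fun p => ?_⟩
  have key : F (Int.fract p.1, Int.fract p.2) = F p := by
    have e1 : F (Int.fract p.1, Int.fract p.2) = F (p.1, Int.fract p.2) :=
      aux_fract_eq (fun x => F (x, Int.fract p.2)) (fun x => h1 x _) p.1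
    have e2 : F (p.1, Int.fract p.2) = F (p.1, p.2) :=
      aux_fract_eq (fun y => F (p.1, y)) (fun y => h2 _ y) p.2
    rw [e1, e2]
  calc ‖F p‖ = ‖F (Int.fract p.1, Int.fract p.2)‖ := by rw [key]
    _ ≤ C := hC _ ⟨⟨Int.fract_nonneg _, (Int.fract_lt_one _).le⟩,
        ⟨Int.fract_nonneg _, (Int.fract_lt_one _).le⟩⟩
    _ ≤ max C 0 := le_max_left _ _



lemma aux_fderiv_shift {E F : Type*} [NormedAddCommGroup E] [NormedSpace ℝ E]
    [NormedAddCommGroup F] [NormedSpace ℝ F]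
    (f : E → F) (hf : Differentiable ℝ f) (c : E) (hc : ∀ p, f (p + c) = f p) (p : E) :
    fderiv ℝ f (p + c) = fderiv ℝ f p := by
  have h1 : HasFDerivAt (fun q => f (q + c)) (fderiv ℝ f (p + c)) p := by
    have := ((hf (p + c)).hasFDerivAt).comp p ((hasFDerivAt_id p).add_const c)
    simp at this
    exact this
  have h2 : (fun q => f (q + c)) = f := funext hc
  rw [h2] at h1
  exact (h1.fderiv).symm

lemma aux_h (h : ℝ → ℝ → ℝ) (hC2 : ContDiff ℝ 2 (Function.uncurry h))
    (hper : periodicH h) :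
    ∃ (h₁ : ℝ → ℝ → ℝ) (M₀ M₁ M₂ : ℝ), 0 ≤ M₀ ∧ 0 ≤ M₁ ∧ 0 ≤ M₂ ∧
      (∀ x, Continuous (h x)) ∧
      (∀ x, Continuous (h₁ x)) ∧
      (∀ x y, HasDerivAt (fun x' => h x' y) (h₁ x y) x) ∧
      (∀ x y, h₁ (x+1) y = h₁ x y) ∧
      (∀ x y, |h x y| ≤ M₀) ∧
      (∀ x y, |h₁ x y| ≤ M₁) ∧
      (∀ x x' y, |h x y - h x' y| ≤ M₁ * |x - x'|) ∧
      (∀ x x' y, |h₁ x y - h₁ x' y| ≤ M₂ * |x - x'|) := by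
  classical
  set G := Function.uncurry h with hG_def
  have hG1 : ContDiff ℝ 1 G := hC2.of_le (by norm_num)
  have hGd : Differentiable ℝ G := hG1.differentiable one_ne_zero
  have contG : Continuous G := hG1.continuous
  set f' := fderiv ℝ G with hf'_def
  have contf' : Continuous f' := hC2.continuous_fderiv (by norm_num)
  have C1f' : ContDiff ℝ 1 f' := hC2.fderiv_right (by norm_num)
  have hf'd : Differentiable ℝ f' := C1f'.differentiable one_ne_zero
  set f'' := fderiv ℝ f' with hf''_def
  have contf'' : Continuous f'' := C1f'.continuous_fderiv one_ne_zero
  -- periodicity of G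
  have perG1 : ∀ p : ℝ × ℝ, G (p + ((1:ℝ), (0:ℝ))) = G p := by
    rintro ⟨x, y⟩
    show h (x + 1) (y + 0) = h x y
    rw [add_zero, hper.1]
  have perG2 : ∀ p : ℝ × ℝ, G (p + ((0:ℝ), (1:ℝ))) = G p := by
    rintro ⟨x, y⟩
    show h (x + 0) (y + 1) = h x y
    rw [add_zero, hper.2]
  have perf'1 : ∀ p : ℝ × ℝ, f' (p + ((1:ℝ), (0:ℝ))) = f' p :=
    fun p => aux_fderiv_shift G hGd _ perG1 p
  have perf'2 : ∀ p : ℝ × ℝ, f' (p + ((0:ℝ), (1:ℝ))) = f' p :=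
    fun p => aux_fderiv_shift G hGd _ perG2 p
  have perf''1 : ∀ p : ℝ × ℝ, f'' (p + ((1:ℝ), (0:ℝ))) = f'' p :=
    fun p => aux_fderiv_shift f' hf'd _ perf'1 p
  have perf''2 : ∀ p : ℝ × ℝ, f'' (p + ((0:ℝ), (1:ℝ))) = f'' p :=
    fun p => aux_fderiv_shift f' hf'd _ perf'2 p
  -- bounds
  have mk_add1 : ∀ x y : ℝ, ((x, y) : ℝ × ℝ) + ((1:ℝ), (0:ℝ)) = (x + 1, y) := by
    intro x y; simp [Prod.ext_iff]
  have mk_add2 : ∀ x y : ℝ, ((x, y) : ℝ × ℝ) + ((0:ℝ), (1:ℝ)) = (x, y + 1) := by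
    intro x y; simp [Prod.ext_iff]
  obtain ⟨M₀, hM₀0, hM₀⟩ := aux_bdd G contG
    (fun x y => by rw [← mk_add1]; exact perG1 _) (fun x y => by rw [← mk_add2]; exact perG2 _)
  obtain ⟨M₁, hM₁0, hM₁⟩ := aux_bdd f' contf'
    (fun x y => by rw [← mk_add1]; exact perf'1 _) (fun x y => by rw [← mk_add2]; exact perf'2 _)
  obtain ⟨M₂, hM₂0, hM₂⟩ := aux_bdd f'' contf''
    (fun x y => by rw [← mk_add1]; exact perf''1 _) (fun x y => by rw [← mk_add2]; exact perf''2 _)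
  -- Lipschitz of G in first variable
  have normfst : ∀ a : ℝ, ‖((a, (0:ℝ)) : ℝ × ℝ)‖ = |a| := by
    intro a; rw [Prod.norm_def]; simp [Real.norm_eq_abs, abs_nonneg]
  have lipG : ∀ x x' y, |h x y - h x' y| ≤ M₁ * |x - x'| := by
    intro x x' y
    have := convex_univ.norm_image_sub_le_of_norm_fderiv_le
      (f := G) (fun p _ => hGd p) (fun p _ => hM₁ p) (Set.mem_univ ((x', y) : ℝ × ℝ))
      (Set.mem_univ ((x, y) : ℝ × ℝ))
    have e : ((x, y) : ℝ × ℝ) - (x', y) = (x - x', 0) := by simp [Prod.ext_iff]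
    rw [e, normfst] at this
    simp [Real.norm_eq_abs] at this
    exact this
  have lipf' : ∀ x x' y, ‖f' (x, y) - f' (x', y)‖ ≤ M₂ * |x - x'| := by
    intro x x' y
    have := convex_univ.norm_image_sub_le_of_norm_fderiv_le
      (f := f') (fun p _ => hf'd p) (fun p _ => hM₂ p) (Set.mem_univ ((x', y) : ℝ × ℝ))
      (Set.mem_univ ((x, y) : ℝ × ℝ))
    have e : ((x, y) : ℝ × ℝ) - (x', y) = (x - x', 0) := by simp [Prod.ext_iff]
    rwa [e, normfst] at this
  -- the partial derivative
  set h₁ : ℝ → ℝ → ℝ := fun x y => f' (x, y) ((1:ℝ), (0:ℝ)) with hh₁_def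
  have norm10 : ‖(((1:ℝ), (0:ℝ)) : ℝ × ℝ)‖ = 1 := by rw [normfst]; norm_num
  have hD : ∀ x y, HasDerivAt (fun x' => h x' y) (h₁ x y) x := by
    intro x y
    have hinner : HasDerivAt (fun x' : ℝ => ((x', y) : ℝ × ℝ)) ((1:ℝ), (0:ℝ)) x :=
      HasDerivAt.prodMk (hasDerivAt_id x) (hasDerivAt_const x y)
    exact ((hGd (x, y)).hasFDerivAt).comp_hasDerivAt x hinner
  refine ⟨h₁, M₀, M₁, M₂, hM₀0, hM₁0, hM₂0, ?_, ?_, hD, ?_, ?_, ?_, lipG, ?_⟩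
  · intro x
    exact contG.comp (continuous_const.prodMk continuous_id)
  · intro x
    exact (contf'.comp (continuous_const.prodMk continuous_id)).clm_apply continuous_const
  · intro x y
    rw [hh₁_def]
    simp only []
    rw [← mk_add1, perf'1]
  · intro x y
    have := hM₀ (x, y)
    simp [Real.norm_eq_abs] at this
    exact this
  · intro x y
    calc |h₁ x y| ≤ ‖f' (x, y)‖ * ‖(((1:ℝ), (0:ℝ)) : ℝ × ℝ)‖ :=
          (f' (x, y)).le_opNorm _
      _ ≤ M₁ := by rw [norm10, mul_one]; exact hM₁ _
  · intro x x' y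
    have e : h₁ x y - h₁ x' y = (f' (x, y) - f' (x', y)) ((1:ℝ), (0:ℝ)) := by
      simp [hh₁_def]
    rw [e]
    calc |(f' (x, y) - f' (x', y)) ((1:ℝ), (0:ℝ))|
        ≤ ‖f' (x, y) - f' (x', y)‖ * ‖(((1:ℝ), (0:ℝ)) : ℝ × ℝ)‖ :=
          (f' (x, y) - f' (x', y)).le_opNorm _
      _ ≤ M₂ * |x - x'| := by rw [norm10, mul_one]; exact lipf' _ _ _

set_option maxHeartbeats 2000000 in
/-- For `|ε| < ε₀` and every `L ≥ C|ε|`, the self-consistent transfer operator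
maps `B_L` into itself. -/
theorem stmt3 (h : ℝ → ℝ → ℝ) (hC2 : ContDiff ℝ 2 (Function.uncurry h))
    (hper : periodicH h) :
    ∃ ε₀ > (0:ℝ), ∃ C ≥ (0:ℝ), ∀ ε : ℝ, |ε| < ε₀ → ∀ L : ℝ, C * |ε| ≤ L →
      ∀ φ : ℝ → ℝ, memB L φ → memB L (Tsc h ε φ) := by
  classical
  obtain ⟨h₁, M₀, M₁, M₂, hM₀0, hM₁0, hM₂0, hcont_h, hcont_h₁, hD, hper₁, hbd₀, hbd₁, lipG,
    liph₁⟩ := aux_h h hC2 hper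
  refine ⟨1 / (10 * (M₁ + M₂ + 1)), by positivity, 10 * (M₂ + 1), by positivity, ?_⟩
  intro ε hε L hL φ hφ
  obtain ⟨hφper, hφ0, hφlip, hφint⟩ := hφ
  have hL0 : 0 ≤ L := le_trans (by positivity) hL
  have contφ : Continuous φ := by
    refine (LipschitzWith.of_dist_le_mul (K := Real.toNNReal L) (f := φ) ?_).continuous
    intro x y
    rw [Real.dist_eq, Real.dist_eq, Real.coe_toNNReal _ hL0]
    exact hφlip x y
  -- numeric smallness
  have hεkey : |ε| * (10 * (M₁ + M₂ + 1)) < 1 := by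
    rw [← lt_div_iff₀ (by positivity : (0:ℝ) < 10 * (M₁ + M₂ + 1))]
    exact hε
  have hε₁ : |ε| * M₁ ≤ 1/10 := by nlinarith [abs_nonneg ε]
  have hε₂ : |ε| * M₂ ≤ 1/10 := by nlinarith [abs_nonneg ε]
  have hεC : |ε| * (M₂ + 1) ≤ L / 10 := by
    have := hL; nlinarith [abs_nonneg ε]
  have hεL : |ε| * M₂ * (1 + L) ≤ L / 5 := by
    nlinarith [abs_nonneg ε, hε₂, hεC, hL0, mul_nonneg (abs_nonneg ε) hM₂0]
  -- upper bound on φ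
  have hφle : ∀ x, φ x ≤ 1 + L := by
    have key : ∀ x ∈ Set.Icc (0:ℝ) 1, φ x ≤ 1 + L := by
      intro x hx
      have h1 : ∀ y ∈ Set.Icc (0:ℝ) 1, φ x - L ≤ φ y := by
        intro y hy
        have h2 : |x - y| ≤ 1 := by
          rw [abs_le]; constructor <;> [linarith [hx.1, hx.2, hy.1, hy.2];
            linarith [hx.1, hx.2, hy.1, hy.2]]
        have h3 := (abs_le.mp (hφlip x y)).2
        have h4 : L * |x - y| ≤ L * 1 := mul_le_mul_of_nonneg_left h2 hL0
        linarith
      have h5 : (∫ _ in (0:ℝ)..1, (φ x - L)) ≤ ∫ y in (0:ℝ)..1, φ y :=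
        intervalIntegral.integral_mono_on zero_le_one
          (intervalIntegrable_const) (contφ.intervalIntegrable _ _) h1
      rw [intervalIntegral.integral_const, hφint] at h5
      simp only [sub_zero, one_smul] at h5
      linarith
    intro x
    have := aux_fract_eq φ hφper x
    rw [← this]
    exact key _ ⟨Int.fract_nonneg _, (Int.fract_lt_one _).le⟩
  -- the integrals I and I'
  set I : ℝ → ℝ := fun x => ∫ y in (0:ℝ)..1, h x y * φ y with hI_def
  set I' : ℝ → ℝ := fun x => ∫ y in (0:ℝ)..1, h₁ x y * φ y with hI'_def
  have hint : ∀ (u : ℝ → ℝ), Continuous u → IntervalIntegrable (fun y => u y * φ y)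
      volume 0 1 := fun u hu => (hu.mul contφ).intervalIntegrable _ _
  have hb : ∀ (u : ℝ → ℝ) (K : ℝ), Continuous u → (∀ y, |u y| ≤ K) →
      |∫ y in (0:ℝ)..1, u y * φ y| ≤ K := by
    intro u K hu hK
    have hup : ∫ y in (0:ℝ)..1, u y * φ y ≤ K := by
      have : ∫ y in (0:ℝ)..1, u y * φ y ≤ ∫ y in (0:ℝ)..1, K * φ y := by
        refine intervalIntegral.integral_mono_on zero_le_one (hint u hu)
          ((continuous_const.mul contφ).intervalIntegrable _ _) (fun y _ => ?_)
        exact mul_le_mul_of_nonneg_right ((le_abs_self _).trans (hK y)) (hφ0 y)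
      rwa [intervalIntegral.integral_const_mul, hφint, mul_one] at this
    have hlo : -K ≤ ∫ y in (0:ℝ)..1, u y * φ y := by
      have : ∫ y in (0:ℝ)..1, (-K) * φ y ≤ ∫ y in (0:ℝ)..1, u y * φ y := by
        refine intervalIntegral.integral_mono_on zero_le_one
          ((continuous_const.mul contφ).intervalIntegrable _ _) (hint u hu) (fun y _ => ?_)
        exact mul_le_mul_of_nonneg_right ((neg_le.mpr ((neg_le_abs _).trans ((abs_neg (u y)) ▸
          (hK y)))).trans_eq rfl) (hφ0 y)
      rwa [intervalIntegral.integral_const_mul, hφint, mul_one] at this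
    exact abs_le.mpr ⟨hlo, hup⟩
  have hbI : ∀ x, |I x| ≤ M₀ := fun x => hb _ _ (hcont_h x) (fun y => hbd₀ x y)
  have hbI' : ∀ x, |I' x| ≤ M₁ := fun x => hb _ _ (hcont_h₁ x) (fun y => hbd₁ x y)
  have hsubI : ∀ (u v : ℝ → ℝ), Continuous u → Continuous v →
      (∫ y in (0:ℝ)..1, u y * φ y) - (∫ y in (0:ℝ)..1, v y * φ y)
        = ∫ y in (0:ℝ)..1, (u y - v y) * φ y := by
    intro u v hu hv
    rw [← intervalIntegral.integral_sub (hint u hu) (hint v hv)]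
    congr 1; funext y; ring
  have lipI : ∀ x x', |I x - I x'| ≤ M₁ * |x - x'| := by
    intro x x'
    rw [hI_def]
    simp only []
    rw [hsubI _ _ (hcont_h x) (hcont_h x')]
    exact hb _ _ ((hcont_h x).sub (hcont_h x')) (fun y => lipG x x' y)
  have lipI' : ∀ x x', |I' x - I' x'| ≤ M₂ * |x - x'| := by
    intro x x'
    rw [hI'_def]
    simp only []
    rw [hsubI _ _ (hcont_h₁ x) (hcont_h₁ x')]
    exact hb _ _ ((hcont_h₁ x).sub (hcont_h₁ x')) (fun y => liph₁ x x' y)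
  have hperI : ∀ x, I (x + 1) = I x := by
    intro x; rw [hI_def]; simp only []
    congr 1; funext y; rw [hper.1]
  have hperI' : ∀ x, I' (x + 1) = I' x := by
    intro x; rw [hI'_def]; simp only []
    congr 1; funext y; rw [hper₁]
  -- derivative of I
  have hIderiv : ∀ x₀, HasDerivAt I (I' x₀) x₀ := by
    intro x₀
    have key := intervalIntegral.hasDerivAt_integral_of_dominated_loc_of_lip
      (μ := volume) (F := fun x t => h x t * φ t) (F' := fun t => h₁ x₀ t * φ t)
      (x₀ := x₀) (a := 0) (b := 1) (bound := fun t => M₁ * φ t) (s := Set.univ) Filter.univ_mem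
      (Filter.Eventually.of_forall (fun x => ((hcont_h x).mul contφ).aestronglyMeasurable))
      (hint _ (hcont_h x₀))
      ((hcont_h₁ x₀).mul contφ).aestronglyMeasurable
      (Filter.Eventually.of_forall (fun t _ => ?_))
      ((continuous_const.mul contφ).intervalIntegrable _ _)
      (Filter.Eventually.of_forall (fun t _ => (hD x₀ t).mul_const (φ t)))
    · exact key.2
    · rw [lipschitzOnWith_iff_dist_le_mul]
      intro x _ y _
      rw [Real.dist_eq, Real.dist_eq, Real.coe_nnabs]
      have e : h x t * φ t - h y t * φ t = (h x t - h y t) * φ t := by ring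
      rw [e, abs_mul, abs_of_nonneg (hφ0 t), abs_of_nonneg (mul_nonneg hM₁0 (hφ0 t))]
      calc |h x t - h y t| * φ t ≤ M₁ * |x - y| * φ t :=
            mul_le_mul_of_nonneg_right (lipG x y t) (hφ0 t)
        _ = M₁ * φ t * |x - y| := by ring
  -- the map g
  set g : ℝ → ℝ := gmap h ε φ with hg_def
  have hgx : ∀ x, g x = x + ε * I x := fun x => rfl
  have hgderiv : ∀ x, HasDerivAt g (1 + ε * I' x) x := by
    intro x
    have := (hasDerivAt_id x).add ((hIderiv x).const_mul ε)
    exact this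
  have hdg : ∀ x, deriv g x = 1 + ε * I' x := fun x => (hgderiv x).deriv
  have hdgl : ∀ x, 9/10 ≤ deriv g x := by
    intro x
    rw [hdg]
    have h1 : |ε * I' x| ≤ 1/10 := by
      rw [abs_mul]
      calc |ε| * |I' x| ≤ |ε| * M₁ := mul_le_mul_of_nonneg_left (hbI' x) (abs_nonneg ε)
        _ ≤ 1/10 := hε₁
    have := neg_abs_le (ε * I' x); linarith
  have hdgu : ∀ x, deriv g x ≤ 11/10 := by
    intro x
    rw [hdg]
    have h1 : |ε * I' x| ≤ 1/10 := by
      rw [abs_mul]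
      calc |ε| * |I' x| ≤ |ε| * M₁ := mul_le_mul_of_nonneg_left (hbI' x) (abs_nonneg ε)
        _ ≤ 1/10 := hε₁
    have := le_abs_self (ε * I' x); linarith
  have hdgpos : ∀ x, 0 < deriv g x := fun x => lt_of_lt_of_le (by norm_num) (hdgl x)
  have lipdg : ∀ x y, |deriv g x - deriv g y| ≤ |ε| * M₂ * |x - y| := by
    intro x y
    rw [hdg, hdg]
    have e : 1 + ε * I' x - (1 + ε * I' y) = ε * (I' x - I' y) := by ring
    rw [e, abs_mul]
    calc |ε| * |I' x - I' y| ≤ |ε| * (M₂ * |x - y|) :=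
          mul_le_mul_of_nonneg_left (lipI' x y) (abs_nonneg ε)
      _ = |ε| * M₂ * |x - y| := by ring
  have hperdg : ∀ x, deriv g (x + 1) = deriv g x := by
    intro x; rw [hdg, hdg, hperI']
  -- expansion bounds for g
  have hexp : ∀ a b : ℝ, a ≤ b → (9/10) * (b - a) ≤ g b - g a ∧ g b - g a ≤ (11/10) * (b - a) := by
    intro a b hab
    have e : g b - g a = (b - a) + ε * (I b - I a) := by rw [hgx, hgx]; ring
    have h1 : |ε * (I b - I a)| ≤ (1/10) * (b - a) := by
      rw [abs_mul]
      calc |ε| * |I b - I a| ≤ |ε| * (M₁ * |b - a|) :=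
            mul_le_mul_of_nonneg_left (lipI b a) (abs_nonneg ε)
        _ = |ε| * M₁ * |b - a| := by ring
        _ ≤ (1/10) * |b - a| := mul_le_mul_of_nonneg_right hε₁ (abs_nonneg _)
        _ = (1/10) * (b - a) := by rw [abs_of_nonneg (by linarith : (0:ℝ) ≤ b - a)]
    have h2 := neg_abs_le (ε * (I b - I a))
    have h3 := le_abs_self (ε * (I b - I a))
    constructor <;> [linarith; linarith]
  have hmono : StrictMono g := by
    intro a b hab
    have := (hexp a b hab.le).1
    have : (0:ℝ) < 9/10 * (b - a) := by nlinarith [sub_pos.mpr hab]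
    linarith [(hexp a b hab.le).1]
  have hinj : Function.Injective g := hmono.injective
  have contg : Continuous g := by
    have : Differentiable ℝ g := fun x => (hgderiv x).differentiableAt
    exact this.continuous
  have hsurj : Function.Surjective g := by
    refine contg.surjective ?_ ?_
    · refine Filter.tendsto_atTop_mono (fun x => ?_)
        (Filter.tendsto_atTop_add_const_right _ (-(|ε| * M₀)) Filter.tendsto_id)
      have h1 : |ε * I x| ≤ |ε| * M₀ := by
        rw [abs_mul]; exact mul_le_mul_of_nonneg_left (hbI x) (abs_nonneg ε)
      have := neg_abs_le (ε * I x)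
      rw [hgx]; simp only [Filter.tendsto_id, id]; linarith
    · refine Filter.tendsto_atBot_mono (fun x => ?_)
        (Filter.tendsto_atBot_add_const_right _ (|ε| * M₀) Filter.tendsto_id)
      have h1 : |ε * I x| ≤ |ε| * M₀ := by
        rw [abs_mul]; exact mul_le_mul_of_nonneg_left (hbI x) (abs_nonneg ε)
      have := le_abs_self (ε * I x)
      rw [hgx]; simp only [id]; linarith
  -- the inverse
  set ginv : ℝ → ℝ := Function.invFun g with hginv_def
  have hgr : ∀ x, g (ginv x) = x := fun x => Function.invFun_eq (hsurj x)
  have hgl : ∀ x, ginv (g x) = x := fun x => Function.leftInverse_invFun hinj x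
  have habs : ∀ a b : ℝ, (9/10) * |b - a| ≤ |g b - g a| := by
    intro a b
    rcases le_total a b with hab | hab
    · have h1 := (hexp a b hab).1
      rw [abs_of_nonneg (by linarith : (0:ℝ) ≤ b - a),
        abs_of_nonneg (by linarith : (0:ℝ) ≤ g b - g a)]
      exact h1
    · have h1 := (hexp b a hab).1
      rw [abs_of_nonpos (by linarith : b - a ≤ 0), abs_of_nonpos (by linarith : g b - g a ≤ 0)]
      linarith
  have hginvlip : ∀ u v, |ginv u - ginv v| ≤ (10/9) * |u - v| := by
    intro u v
    have h1 := habs (ginv v) (ginv u)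
    rw [hgr, hgr] at h1
    linarith
  have contginv : Continuous ginv := by
    refine (LipschitzWith.of_dist_le_mul (K := Real.toNNReal (10/9)) (f := ginv) ?_).continuous
    intro x y
    rw [Real.dist_eq, Real.dist_eq, Real.coe_toNNReal _ (by norm_num : (0:ℝ) ≤ 10/9)]
    exact hginvlip x y
  have hperg : ∀ x, g (x + 1) = g x + 1 := by
    intro x; rw [hgx, hgx, hperI]; ring
  have hperginv : ∀ x, ginv (x + 1) = ginv x + 1 := by
    intro x
    apply hinj
    rw [hgr, hperg, hgr]
  have contdg : Continuous (deriv g) := by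
    refine (LipschitzWith.of_dist_le_mul (K := Real.toNNReal (|ε| * M₂))
      (f := deriv g) ?_).continuous
    intro x y
    rw [Real.dist_eq, Real.dist_eq, Real.coe_toNNReal _ (by positivity : (0:ℝ) ≤ |ε| * M₂)]
    exact lipdg x y
  -- the function ψ = Lop h ε φ φ
  set ψ : ℝ → ℝ := fun x => φ (ginv x) / deriv g (ginv x) with hψ_def
  have hψ_eq : Lop h ε φ φ = ψ := rfl
  have hψ0 : ∀ x, 0 ≤ ψ x := fun x => div_nonneg (hφ0 _) (hdgpos _).le
  have hψper : ∀ x, ψ (x + 1) = ψ x := by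
    intro x
    rw [hψ_def]
    simp only []
    rw [hperginv, hφper, hperdg]
  have hψlip : ∀ x y, |ψ x - ψ y| ≤ 2 * L * |x - y| := by
    intro x y
    set a := ginv x
    set b := ginv y
    set Da := deriv g a with hDa_def
    set Db := deriv g b with hDb_def
    have hab : |a - b| ≤ (10/9) * |x - y| := hginvlip x y
    have hDa1 : 9/10 ≤ Da := hdgl a
    have hDa2 : Da ≤ 11/10 := hdgu a
    have hDb1 : 9/10 ≤ Db := hdgl b
    have hDb2 : Db ≤ 11/10 := hdgu b
    have hDd : |Da - Db| ≤ |ε| * M₂ * |a - b| := lipdg a b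
    have hφb1 : φ b ≤ 1 + L := hφle b
    have hφb0 : 0 ≤ φ b := hφ0 b
    have hφab : |φ a - φ b| ≤ L * |a - b| := hφlip a b
    have hDapos : (0:ℝ) < Da := by linarith
    have hDbpos : (0:ℝ) < Db := by linarith
    have key : ψ x - ψ y = ((φ a - φ b) * Db + φ b * (Db - Da)) / (Da * Db) := by
      rw [hψ_def]
      simp only []
      rw [← hDa_def, ← hDb_def]
      field_simp
      ring
    rw [key, abs_div, abs_of_pos (by positivity : (0:ℝ) < Da * Db),
      div_le_iff₀ (by positivity : (0:ℝ) < Da * Db)]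
    have hnum : |(φ a - φ b) * Db + φ b * (Db - Da)| ≤
        L * |a - b| * (11/10) + (1 + L) * (|ε| * M₂ * |a - b|) := by
      calc |(φ a - φ b) * Db + φ b * (Db - Da)|
          ≤ |(φ a - φ b) * Db| + |φ b * (Db - Da)| := abs_add_le _ _
        _ = |φ a - φ b| * |Db| + |φ b| * |Db - Da| := by rw [abs_mul, abs_mul]
        _ ≤ L * |a - b| * (11/10) + (1 + L) * (|ε| * M₂ * |a - b|) := by
            have e1 : |Db| = Db := abs_of_pos hDbpos
            have e2 : |φ b| = φ b := abs_of_nonneg hφb0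
            have e3 : |Db - Da| ≤ |ε| * M₂ * |a - b| := by
              rw [abs_sub_comm]; exact hDd
            rw [e1, e2]
            have t1 : |φ a - φ b| * Db ≤ L * |a - b| * (11/10) :=
              mul_le_mul hφab hDb2 hDbpos.le (mul_nonneg hL0 (abs_nonneg _))
            have t2 : φ b * |Db - Da| ≤ (1 + L) * (|ε| * M₂ * |a - b|) :=
              mul_le_mul hφb1 e3 (abs_nonneg _) (by linarith)
            linarith
    have hεM : |ε| * M₂ * |a - b| * (1 + L) ≤ (L / 5) * |a - b| := by
      have := mul_le_mul_of_nonneg_right hεL (abs_nonneg (a - b))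
      linarith
    have s2 : L * |a - b| ≤ L * ((10/9) * |x - y|) := mul_le_mul_of_nonneg_left hab hL0
    have hDD : (81:ℝ)/100 ≤ Da * Db := by nlinarith
    have s4 := mul_le_mul_of_nonneg_left hDD
      (by positivity : (0:ℝ) ≤ 2 * (L * |x - y|))
    have s5 : (0:ℝ) ≤ L * |x - y| := mul_nonneg hL0 (abs_nonneg _)
    nlinarith
  have contψ : Continuous ψ :=
    (contφ.comp contginv).div (contdg.comp contginv) (fun x => (hdgpos _).ne')
  -- integral of ψ
  have hψint : (∫ x in (0:ℝ)..1, ψ x) = 1 := by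
    set a := ginv 0 with ha_def
    have hb1 : ginv 1 = a + 1 := by
      have := hperginv 0
      rw [zero_add] at this
      rw [ha_def, ← this]
    have hgderiv2 : ∀ x ∈ Set.uIcc a (a+1), HasDerivAt g (deriv g x) x := by
      intro x _
      rw [hdg]
      exact hgderiv x
    have hsubst := intervalIntegral.integral_comp_mul_deriv (f := g) (f' := deriv g) (g := ψ)
      (a := a) (b := a + 1) hgderiv2 contdg.continuousOn contψ
    have hga : g a = 0 := hgr 0
    have hgb : g (a + 1) = 1 := by rw [hperg, hga, zero_add]
    rw [hga, hgb] at hsubst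
    have hLHS : (∫ x in a..a+1, (ψ ∘ g) x * deriv g x) = ∫ x in a..a+1, φ x := by
      apply intervalIntegral.integral_congr
      intro x _
      show ψ (g x) * deriv g x = φ x
      rw [hψ_def]
      simp only []
      rw [hgl x]
      exact div_mul_cancel₀ _ (hdgpos x).ne'
    have hperφ' : Function.Periodic φ 1 := hφper
    have hshift := hperφ'.intervalIntegral_add_eq a 0
    rw [zero_add] at hshift
    rw [← hsubst, hLHS, hshift, hφint]
  -- conclusion : Tsc = Pop ψ
  have hT_eq : Tsc h ε φ = Pop ψ := by rw [Tsc, hψ_eq]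
  rw [hT_eq]
  refine ⟨?_, ?_, ?_, ?_⟩
  · intro x
    show (1/2) * ψ ((x+1)/2) + (1/2) * ψ ((x+1+1)/2) = (1/2) * ψ (x/2) + (1/2) * ψ ((x+1)/2)
    have e : (x+1+1)/2 = x/2 + 1 := by ring
    rw [e, hψper]
    ring
  · intro x
    have h1 := hψ0 (x/2)
    have h2 := hψ0 ((x+1)/2)
    show 0 ≤ (1/2) * ψ (x/2) + (1/2) * ψ ((x+1)/2)
    linarith
  · intro x y
    show |(1/2) * ψ (x/2) + (1/2) * ψ ((x+1)/2) - ((1/2) * ψ (y/2) + (1/2) * ψ ((y+1)/2))|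
      ≤ L * |x - y|
    have h1 := hψlip (x/2) (y/2)
    have h2 := hψlip ((x+1)/2) ((y+1)/2)
    have e1 : |x/2 - y/2| = |x - y|/2 := by
      rw [show x/2 - y/2 = (x - y)/2 by ring, abs_div]
      norm_num
    have e2 : |(x+1)/2 - (y+1)/2| = |x - y|/2 := by
      rw [show (x+1)/2 - (y+1)/2 = (x - y)/2 by ring, abs_div]
      norm_num
    rw [e1] at h1
    rw [e2] at h2
    have e : (1/2) * ψ (x/2) + (1/2) * ψ ((x+1)/2) - ((1/2) * ψ (y/2) + (1/2) * ψ ((y+1)/2))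
        = (1/2) * (ψ (x/2) - ψ (y/2)) + (1/2) * (ψ ((x+1)/2) - ψ ((y+1)/2)) := by ring
    rw [e]
    refine (abs_add_le _ _).trans ?_
    rw [abs_mul, abs_mul, abs_of_nonneg (by norm_num : (0:ℝ) ≤ 1/2)]
    linarith
  · have c1 : Continuous (fun x : ℝ => ψ (x/2)) := contψ.comp (continuous_id.div_const 2)
    have c2 : Continuous (fun x : ℝ => ψ ((x+1)/2)) :=
      contψ.comp ((continuous_id.add continuous_const).div_const 2)
    have hsplit : (∫ x in (0:ℝ)..1, Pop ψ x)
        = (1/2) * (∫ x in (0:ℝ)..1, ψ (x/2)) + (1/2) * (∫ x in (0:ℝ)..1, ψ ((x+1)/2)) := by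
      rw [← intervalIntegral.integral_const_mul, ← intervalIntegral.integral_const_mul,
        ← intervalIntegral.integral_add (f := fun x => 1/2 * ψ (x/2)) (g := fun x => 1/2 * ψ ((x+1)/2)) ((continuous_const.mul c1).intervalIntegrable _ _)
          ((continuous_const.mul c2).intervalIntegrable _ _)]
      rfl
    have hA : (∫ x in (0:ℝ)..1, ψ (x/2)) = 2 * ∫ x in (0:ℝ)..(1/2:ℝ), ψ x := by
      rw [intervalIntegral.integral_comp_div (f := ψ) (a := 0) (b := 1)
        (two_ne_zero)]
      norm_num
    have hB : (∫ x in (0:ℝ)..1, ψ ((x+1)/2)) = 2 * ∫ x in (1/2:ℝ)..1, ψ x := by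
      have h1 : (∫ x in (0:ℝ)..1, ψ ((x+1)/2)) = ∫ x in (0+1:ℝ)..(1+1:ℝ), ψ (x/2) :=
        intervalIntegral.integral_comp_add_right (f := fun u => ψ (u/2)) 1
      rw [h1]
      norm_num
    have hadj := intervalIntegral.integral_add_adjacent_intervals
      (contψ.intervalIntegrable (μ := volume) 0 (1/2)) (contψ.intervalIntegrable (μ := volume) (1/2) 1)
    rw [hsplit, hA, hB]
    linarith [hadj, hψint]
end

section
/- There exist ε₀ > 0 and C ≥ 0, depending only on h, such that for every ε with |ε| ≤ ε₀, every a ≥ 0, and every φ ∈ V_a with ∫₀¹ φ = 1: the map g_{ε,φ} is a strictly increasing bijection of ℝ and the function L_{ε,φ}φ := (φ / g_{ε,φ}') ∘ g_{ε,φ}^{-1} belongs to V_{a'}, where a' = a·(1 + C|ε|) + C|ε|. -/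
open MeasureTheory

/-- The cone `V_a` of positive, continuous, 1-periodic functions with
`φ x ≤ e^{a|x−y|} φ y` for all `x, y`. -/
def memV (a : ℝ) (φ : ℝ → ℝ) : Prop :=
  Continuous φ ∧ (∀ x, 0 < φ x) ∧ (∀ x, φ (x+1) = φ x) ∧
  ∀ x y, φ x ≤ Real.exp (a * |x - y|) * φ y



section auxx

open Set Function

/-- first partial derivative in the first variable -/
noncomputable def pd (G : ℝ → ℝ → ℝ) : ℝ → ℝ → ℝ :=
  fun x y => fderiv ℝ (Function.uncurry G) (x, y) ((1:ℝ), (0:ℝ))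

lemma pd_hasDerivAt {G : ℝ → ℝ → ℝ} (hG : Differentiable ℝ (Function.uncurry G)) (x y : ℝ) :
    HasDerivAt (fun t => G t y) (pd G x y) x := by
  have h1 : HasDerivAt (fun t : ℝ => (t, y)) ((1:ℝ), (0:ℝ)) x :=
    (hasDerivAt_id x).prodMk (hasDerivAt_const x y)
  exact (hG (x, y)).hasFDerivAt.comp_hasDerivAt x h1

lemma pd_deriv {G : ℝ → ℝ → ℝ} (hG : Differentiable ℝ (Function.uncurry G)) (x y : ℝ) :
    pd G x y = deriv (fun t => G t y) x :=
  ((pd_hasDerivAt hG x y)).deriv.symm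

lemma contDiff_pd {G : ℝ → ℝ → ℝ} (hG : ContDiff ℝ 2 (Function.uncurry G)) :
    ContDiff ℝ 1 (Function.uncurry (pd G)) := by
  exact (hG.fderiv_right (m := 1) (by norm_num)).clm_apply contDiff_const

lemma continuous_pd {G : ℝ → ℝ → ℝ} (hG : ContDiff ℝ 1 (Function.uncurry G)) :
    Continuous (Function.uncurry (pd G)) :=
  (hG.continuous_fderiv one_ne_zero).clm_apply continuous_const

lemma deriv_periodic {f : ℝ → ℝ} (hf : ∀ x, f (x + 1) = f x) (x : ℝ) :
    deriv f (x + 1) = deriv f x := by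
  have h : (fun t => f (t + 1)) = f := funext hf
  rw [← deriv_comp_add_const f 1 x, h]

lemma pd_per1 {G : ℝ → ℝ → ℝ} (hG : Differentiable ℝ (Function.uncurry G))
    (hp : ∀ x y, G (x + 1) y = G x y) (x y : ℝ) : pd G (x + 1) y = pd G x y := by
  rw [pd_deriv hG, pd_deriv hG]
  exact deriv_periodic (fun t => hp t y) x

lemma pd_per2 {G : ℝ → ℝ → ℝ} (hG : Differentiable ℝ (Function.uncurry G))
    (hp : ∀ x y, G x (y + 1) = G x y) (x y : ℝ) : pd G x (y + 1) = pd G x y := by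
  rw [pd_deriv hG, pd_deriv hG]
  congr 1
  funext t
  exact hp t y

lemma bdd_of_periodic {K : ℝ → ℝ → ℝ} (hc : Continuous (Function.uncurry K))
    (h1 : ∀ x y, K (x + 1) y = K x y) (h2 : ∀ x y, K x (y + 1) = K x y) :
    ∃ M, 0 ≤ M ∧ ∀ x y, |K x y| ≤ M := by
  obtain ⟨M, hM⟩ := (isCompact_Icc.prod isCompact_Icc).exists_bound_of_continuousOn
    (s := Icc (0:ℝ) 1 ×ˢ Icc (0:ℝ) 1) hc.continuousOn
  refine ⟨max M 0, le_max_right _ _, fun x y => ?_⟩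
  have e1 : K (Int.fract x) y = K x y := by
    have hp : Function.Periodic (fun t => K t y) 1 := fun t => h1 t y
    have h3 := hp.sub_int_mul_eq (x := x) ⌊x⌋
    simp only [mul_one] at h3
    rw [Int.self_sub_floor] at h3
    exact h3
  have e2 : K (Int.fract x) (Int.fract y) = K (Int.fract x) y := by
    have hp : Function.Periodic (fun t => K (Int.fract x) t) 1 := fun t => h2 _ t
    have h3 := hp.sub_int_mul_eq (x := y) ⌊y⌋
    simp only [mul_one] at h3
    rw [Int.self_sub_floor] at h3
    exact h3
  have hmem : (Int.fract x, Int.fract y) ∈ Icc (0:ℝ) 1 ×ˢ Icc (0:ℝ) 1 := by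
    constructor
    · exact ⟨Int.fract_nonneg x, (Int.fract_lt_one x).le⟩
    · exact ⟨Int.fract_nonneg y, (Int.fract_lt_one y).le⟩
  have := hM _ hmem
  rw [Function.uncurry] at this
  simp only [Real.norm_eq_abs] at this
  calc |K x y| = |K (Int.fract x) (Int.fract y)| := by rw [e2, e1]
    _ ≤ M := this
    _ ≤ max M 0 := le_max_left _ _

lemma integral_mul_le (φ f : ℝ → ℝ) (hφc : Continuous φ) (hφ0 : ∀ x, 0 ≤ φ x)
    (hφ1 : (∫ x in (0:ℝ)..1, φ x) = 1) (hf : Continuous f) {M : ℝ}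
    (hM : ∀ y, |f y| ≤ M) : |∫ y in (0:ℝ)..1, f y * φ y| ≤ M := by
  have h1 : |∫ y in (0:ℝ)..1, f y * φ y| ≤ ∫ y in (0:ℝ)..1, |f y * φ y| :=
    intervalIntegral.abs_integral_le_integral_abs zero_le_one
  have h2 : (∫ y in (0:ℝ)..1, |f y * φ y|) ≤ ∫ y in (0:ℝ)..1, M * φ y := by
    apply intervalIntegral.integral_mono_on zero_le_one
      ((hf.mul hφc).abs.intervalIntegrable 0 1)
      ((continuous_const.mul hφc).intervalIntegrable 0 1)
    intro y _
    simp only [Pi.mul_apply]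
    rw [abs_mul, abs_of_nonneg (hφ0 y)]
    exact mul_le_mul_of_nonneg_right (hM y) (hφ0 y)
  have h3 : (∫ y in (0:ℝ)..1, M * φ y) = M := by
    rw [intervalIntegral.integral_const_mul, hφ1, mul_one]
  linarith

end auxx

/-- For small `ε`, `g_{ε,φ}` is a strictly increasing bijection and the transfer operator
`L_{ε,φ}` maps `V_a ∩ {∫₀¹ φ = 1}` into `V_{a'}` with `a' = a(1 + C|ε|) + C|ε|`. -/
theorem stmt8 (h : ℝ → ℝ → ℝ) (hC2 : ContDiff ℝ 2 (Function.uncurry h))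
    (hper : periodicH h) :
    ∃ ε₀ > (0:ℝ), ∃ C ≥ (0:ℝ), ∀ ε : ℝ, |ε| ≤ ε₀ → ∀ a : ℝ, 0 ≤ a →
      ∀ φ : ℝ → ℝ, memV a φ → (∫ x in (0:ℝ)..1, φ x) = 1 →
        StrictMono (gmap h ε φ) ∧ Function.Bijective (gmap h ε φ) ∧
        memV (a * (1 + C * |ε|) + C * |ε|) (Lop h ε φ φ) := by
  classical
  -- differentiability data for h
  have hdiff : Differentiable ℝ (Function.uncurry h) := hC2.differentiable (by norm_num)
  have hpd1C : ContDiff ℝ 1 (Function.uncurry (pd h)) := contDiff_pd hC2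
  have hpd1diff : Differentiable ℝ (Function.uncurry (pd h)) := hpd1C.differentiable one_ne_zero
  have hpd1c : Continuous (Function.uncurry (pd h)) := hpd1C.continuous
  have hpd2c : Continuous (Function.uncurry (pd (pd h))) := continuous_pd hpd1C
  -- periodicity of the partial derivatives
  have hp1a : ∀ x y, pd h (x + 1) y = pd h x y := pd_per1 hdiff hper.1
  have hp1b : ∀ x y, pd h x (y + 1) = pd h x y := pd_per2 hdiff hper.2
  have hp2a : ∀ x y, pd (pd h) (x + 1) y = pd (pd h) x y := pd_per1 hpd1diff hp1a
  have hp2b : ∀ x y, pd (pd h) x (y + 1) = pd (pd h) x y := pd_per2 hpd1diff hp1b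
  -- global bounds
  obtain ⟨M₀, hM₀0, hM₀⟩ := bdd_of_periodic hC2.continuous hper.1 hper.2
  obtain ⟨M₁, hM₁0, hM₁⟩ := bdd_of_periodic hpd1c hp1a hp1b
  obtain ⟨M₂, hM₂0, hM₂⟩ := bdd_of_periodic hpd2c hp2a hp2b
  refine ⟨1 / (2 * (M₁ + 1)), by positivity, 2 * M₁ + 4 * M₂ + 1, by positivity, ?_⟩
  intro ε hε a ha φ hφ hint
  obtain ⟨hφc, hφpos, hφper, hφcone⟩ := hφ
  have hφ0 : ∀ x, 0 ≤ φ x := fun x => (hφpos x).le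
  have hεM : |ε| * M₁ ≤ 1 / 2 := by
    have h1 : |ε| * (M₁ + 1) ≤ 1 / 2 := by
      have h2 : |ε| * (2 * (M₁ + 1)) ≤ 1 := by
        have := mul_le_mul_of_nonneg_right hε (by positivity : (0:ℝ) ≤ 2 * (M₁ + 1))
        rwa [div_mul_cancel₀] at this
        positivity
      linarith
    nlinarith [abs_nonneg ε]
  -- continuity of slices
  have hcx : ∀ x, Continuous fun t => h x t :=
    fun x => hC2.continuous.comp (continuous_const.prodMk continuous_id)
  have hcy : ∀ t, Continuous fun x => h x t :=
    fun t => hC2.continuous.comp (continuous_id.prodMk continuous_const)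
  have hcpx : ∀ x, Continuous fun t => pd h x t :=
    fun x => hpd1c.comp (continuous_const.prodMk continuous_id)
  -- the derivative function
  set F' : ℝ → ℝ := fun x => ∫ y in (0:ℝ)..1, pd h x y * φ y with hF'def
  have hgd : ∀ x, HasDerivAt (gmap h ε φ) (1 + ε * F' x) x := by
    intro x
    have hFd : HasDerivAt (fun x => ∫ y in (0:ℝ)..1, h x y * φ y) (F' x) x := by
      have := intervalIntegral.hasDerivAt_integral_of_dominated_loc_of_deriv_le
        (F := fun x t => h x t * φ t) (F' := fun x t => pd h x t * φ t)
        (bound := fun t => M₁ * φ t) (x₀ := x) (a := 0) (b := 1) (μ := volume)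
        (s := Set.univ) Filter.univ_mem
        (Filter.Eventually.of_forall fun x => ((hcx x).mul hφc).aestronglyMeasurable)
        (((hcx x).mul hφc).intervalIntegrable 0 1)
        (((hcpx x).mul hφc).aestronglyMeasurable)
        (Filter.Eventually.of_forall fun t _ x _ => by
          rw [Real.norm_eq_abs, abs_mul, abs_of_nonneg (hφ0 t)]
          exact mul_le_mul_of_nonneg_right (hM₁ x t) (hφ0 t))
        ((continuous_const.mul hφc).intervalIntegrable 0 1)
        (Filter.Eventually.of_forall fun t _ x _ =>
          (pd_hasDerivAt hdiff x t).mul_const (φ t))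
      exact this.2
    exact (hasDerivAt_id' x).add (hFd.const_mul ε)
  have hderiv_eq : deriv (gmap h ε φ) = fun x => 1 + ε * F' x :=
    funext fun x => (hgd x).deriv
  have hgc : Continuous (gmap h ε φ) := by
    have : Differentiable ℝ (gmap h ε φ) := fun x => (hgd x).differentiableAt
    exact this.continuous
  -- bounds on F'
  have hF'bd : ∀ x, |F' x| ≤ M₁ := fun x =>
    integral_mul_le φ _ hφc hφ0 hint (hcpx x) (fun y => hM₁ x y)
  have hg'lb : ∀ x, (1:ℝ) / 2 ≤ 1 + ε * F' x := by
    intro x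
    have h1 : |ε * F' x| ≤ |ε| * M₁ := by
      rw [abs_mul]
      exact mul_le_mul_of_nonneg_left (hF'bd x) (abs_nonneg ε)
    have h2 := (abs_le.mp (h1.trans hεM)).1
    linarith
  -- strict monotonicity
  have hmono : StrictMono (gmap h ε φ) := by
    apply strictMono_of_deriv_pos
    intro x
    rw [hderiv_eq]
    have := hg'lb x
    dsimp only
    linarith
  -- periodicity of g
  have hgper : ∀ x, gmap h ε φ (x + 1) = gmap h ε φ x + 1 := by
    intro x
    simp only [gmap]
    have : (∫ y in (0:ℝ)..1, h (x + 1) y * φ y) = ∫ y in (0:ℝ)..1, h x y * φ y := by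
      congr 1
      funext y
      rw [hper.1]
    rw [this]
    ring
  -- surjectivity
  have hFbd : ∀ x, |∫ y in (0:ℝ)..1, h x y * φ y| ≤ M₀ := fun x =>
    integral_mul_le φ _ hφc hφ0 hint (hcx x) (fun y => hM₀ x y)
  have hsurj : Function.Surjective (gmap h ε φ) := by
    intro z
    set B := |ε| * M₀ + 1 with hB
    have hB0 : 0 < B := by positivity
    have hbd : ∀ x, |ε * ∫ y in (0:ℝ)..1, h x y * φ y| ≤ |ε| * M₀ := by
      intro x
      rw [abs_mul]
      exact mul_le_mul_of_nonneg_left (hFbd x) (abs_nonneg ε)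
    have h1 : gmap h ε φ (z - B) ≤ z := by
      have := (abs_le.mp (hbd (z - B))).2
      simp only [gmap]
      linarith
    have h2 : z ≤ gmap h ε φ (z + B) := by
      have := (abs_le.mp (hbd (z + B))).1
      simp only [gmap]
      linarith
    obtain ⟨x, _, hx⟩ := intermediate_value_Icc (by linarith : z - B ≤ z + B)
      hgc.continuousOn ⟨h1, h2⟩
    exact ⟨x, hx⟩
  have hinj : Function.Injective (gmap h ε φ) := hmono.injective
  have hbij : Function.Bijective (gmap h ε φ) := ⟨hinj, hsurj⟩
  refine ⟨hmono, hbij, ?_⟩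
  -- inverse function facts
  set ginv := Function.invFun (gmap h ε φ) with hginv
  have hgi : ∀ z, gmap h ε φ (ginv z) = z := fun z => Function.invFun_eq (hsurj z)
  have hig : ∀ x, ginv (gmap h ε φ x) = x := fun x => Function.leftInverse_invFun hinj x
  have hginv_mono : ∀ x y, x ≤ y → ginv x ≤ ginv y := by
    intro x y hxy
    by_contra hc
    push_neg at hc
    have := hmono hc
    rw [hgi, hgi] at this
    linarith
  have hginv_est : ∀ x y, x ≤ y → ginv y - ginv x ≤ (1 + 2 * M₁ * |ε|) * (y - x) := by
    intro x y hxy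
    have huv : ginv x ≤ ginv y := hginv_mono x y hxy
    have hjmono : Monotone (fun t => gmap h ε φ t - (1 - |ε| * M₁) * t) := by
      apply monotone_of_deriv_nonneg
      · exact fun t => ((hgd t).sub ((hasDerivAt_id t).const_mul _)).differentiableAt
      · intro t
        have hder : HasDerivAt (fun s => gmap h ε φ s - (1 - |ε| * M₁) * s)
            (1 + ε * F' t - (1 - |ε| * M₁) * 1) t :=
          (hgd t).sub ((hasDerivAt_id t).const_mul _)
        rw [hder.deriv]
        have h1 : |ε * F' t| ≤ |ε| * M₁ := by
          rw [abs_mul]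
          exact mul_le_mul_of_nonneg_left (hF'bd t) (abs_nonneg ε)
        have h2 := (abs_le.mp h1).1
        linarith
    have hj := hjmono huv
    simp only at hj
    rw [hgi, hgi] at hj
    set c := |ε| * M₁ with hc
    have hc0 : 0 ≤ c := by positivity
    have hkey : (1 - c) * (ginv y - ginv x) ≤ y - x := by nlinarith
    have hd0 : 0 ≤ ginv y - ginv x := by linarith
    nlinarith [mul_nonneg (mul_nonneg hc0 (by linarith : (0:ℝ) ≤ 1 - 2 * c)) hd0,
      mul_le_mul_of_nonneg_left hkey (by linarith : (0:ℝ) ≤ 1 + 2 * c)]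
  have habs : ∀ x y, |ginv x - ginv y| ≤ (1 + 2 * M₁ * |ε|) * |x - y| := by
    have key : ∀ x y, x ≤ y → |ginv y - ginv x| ≤ (1 + 2 * M₁ * |ε|) * |y - x| := by
      intro x y hxy
      rw [abs_of_nonneg (sub_nonneg.mpr (hginv_mono x y hxy)),
        abs_of_nonneg (sub_nonneg.mpr hxy)]
      exact hginv_est x y hxy
    intro x y
    rcases le_total x y with hxy | hxy
    · rw [abs_sub_comm, abs_sub_comm x y]
      exact key x y hxy
    · exact key y x hxy
  have hginvc : Continuous ginv := by
    have hL : LipschitzWith (Real.toNNReal (1 + 2 * M₁ * |ε|)) ginv := by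
      apply LipschitzWith.of_dist_le_mul
      intro x y
      rw [Real.dist_eq, Real.dist_eq, Real.coe_toNNReal _ (by positivity)]
      exact habs x y
    exact hL.continuous
  -- Lipschitz bound for F'
  have hMVT : ∀ u v y, |pd h u y - pd h v y| ≤ M₂ * |u - v| := by
    intro u v y
    have := Convex.norm_image_sub_le_of_norm_deriv_le (f := fun t => pd h t y) (C := M₂)
      (fun t _ => (pd_hasDerivAt hpd1diff t y).differentiableAt)
      (fun t _ => by
        rw [Real.norm_eq_abs, (pd_hasDerivAt hpd1diff t y).deriv]
        exact hM₂ t y)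
      convex_univ (Set.mem_univ v) (Set.mem_univ u)
    simpa [Real.norm_eq_abs] using this
  have hF'lip : ∀ u v, |F' u - F' v| ≤ M₂ * |u - v| := by
    intro u v
    have heq : F' u - F' v = ∫ y in (0:ℝ)..1, (pd h u y - pd h v y) * φ y := by
      rw [hF'def]
      simp only
      rw [← intervalIntegral.integral_sub (f := fun y => pd h u y * φ y)
        (g := fun y => pd h v y * φ y) (((hcpx u).mul hφc).intervalIntegrable 0 1)
        (((hcpx v).mul hφc).intervalIntegrable 0 1)]
      congr 1
      funext y
      ring
    rw [heq]
    exact integral_mul_le φ _ hφc hφ0 hint ((hcpx u).sub (hcpx v)) (fun y => hMVT u v y)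
  have hF'c : Continuous F' := by
    have hL : LipschitzWith (Real.toNNReal M₂) F' := by
      apply LipschitzWith.of_dist_le_mul
      intro x y
      rw [Real.dist_eq, Real.dist_eq, Real.coe_toNNReal _ hM₂0]
      exact hF'lip x y
    exact hL.continuous
  -- periodicity of ginv and F'
  have hginvper : ∀ x, ginv (x + 1) = ginv x + 1 := by
    intro x
    have h1 : gmap h ε φ (ginv x + 1) = x + 1 := by rw [hgper, hgi]
    calc ginv (x + 1) = ginv (gmap h ε φ (ginv x + 1)) := by rw [h1]
      _ = ginv x + 1 := hig _
  have hF'per : ∀ x, F' (x + 1) = F' x := by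
    intro x
    rw [hF'def]
    simp only
    congr 1
    funext y
    rw [hp1a]
  -- rewrite Lop
  have hLop : Lop h ε φ φ = fun x => φ (ginv x) / (1 + ε * F' (ginv x)) := by
    funext x
    rw [Lop, hderiv_eq, ← hginv]
  rw [hLop]
  have hD0 : ∀ x, (0:ℝ) < 1 + ε * F' x := fun x => lt_of_lt_of_le (by norm_num) (hg'lb x)
  refine ⟨?_, ?_, ?_, ?_⟩
  · exact (hφc.comp hginvc).div
      (continuous_const.add (continuous_const.mul (hF'c.comp hginvc)))
      (fun x => (hD0 _).ne')
  · exact fun x => div_pos (hφpos _) (hD0 _)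
  · intro x
    dsimp only
    rw [hginvper, hφper, hF'per]
  · intro x y
    set u := ginv x
    set v := ginv y
    set C := 2 * M₁ + 4 * M₂ + 1 with hC
    have hDu := hg'lb u
    have hDv := hg'lb v
    have hd1 : |u - v| ≤ (1 + 2 * M₁ * |ε|) * |x - y| := habs x y
    have hd2 : |u - v| ≤ 2 * |x - y| := by
      refine hd1.trans (mul_le_mul_of_nonneg_right (by nlinarith [abs_nonneg ε]) (abs_nonneg _))
    have h1 : φ u ≤ Real.exp (a * |u - v|) * φ v := hφcone u v
    have h2 : 1 + ε * F' v ≤ Real.exp (2 * M₂ * |ε| * |u - v|) * (1 + ε * F' u) := by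
      have hdd : |(1 + ε * F' v) - (1 + ε * F' u)| ≤ |ε| * (M₂ * |v - u|) := by
        have : (1 + ε * F' v) - (1 + ε * F' u) = ε * (F' v - F' u) := by ring
        rw [this, abs_mul]
        exact mul_le_mul_of_nonneg_left (hF'lip v u) (abs_nonneg ε)
      have h3 := (abs_le.mp hdd).2
      have h4 : 1 + ε * F' v ≤ (1 + 2 * M₂ * |ε| * |u - v|) * (1 + ε * F' u) := by
        rw [abs_sub_comm v u] at h3
        nlinarith [abs_nonneg (u - v), mul_nonneg (mul_nonneg hM₂0 (abs_nonneg ε)) (abs_nonneg (u - v))]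
      refine h4.trans (mul_le_mul_of_nonneg_right ?_ (by linarith))
      have := Real.add_one_le_exp (2 * M₂ * |ε| * |u - v|)
      linarith
    have hexp : a * |u - v| + 2 * M₂ * |ε| * |u - v| ≤
        (a * (1 + C * |ε|) + C * |ε|) * |x - y| := by
      have e1 : a * |u - v| ≤ a * ((1 + 2 * M₁ * |ε|) * |x - y|) :=
        mul_le_mul_of_nonneg_left hd1 ha
      have e2 : 2 * M₂ * |ε| * |u - v| ≤ 2 * M₂ * |ε| * (2 * |x - y|) :=
        mul_le_mul_of_nonneg_left hd2 (by positivity)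
      have hxy0 : 0 ≤ |x - y| := abs_nonneg _
      have hε0 : 0 ≤ |ε| := abs_nonneg _
      rw [hC]
      nlinarith [mul_nonneg (mul_nonneg ha hM₂0) (mul_nonneg hε0 hxy0),
        mul_nonneg ha (mul_nonneg hε0 hxy0),
        mul_nonneg hM₁0 (mul_nonneg hε0 hxy0),
        mul_nonneg hε0 hxy0,
        mul_nonneg hM₂0 (mul_nonneg hε0 hxy0)]
    rw [show Real.exp ((a * (1 + C * |ε|) + C * |ε|) * |x - y|) * (φ v / (1 + ε * F' v))
        = Real.exp ((a * (1 + C * |ε|) + C * |ε|) * |x - y|) * φ v / (1 + ε * F' v) by ring,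
      div_le_div_iff₀ (hD0 u) (hD0 v)]
    calc φ u * (1 + ε * F' v)
        ≤ (Real.exp (a * |u - v|) * φ v) * (Real.exp (2 * M₂ * |ε| * |u - v|) * (1 + ε * F' u)) := by
          exact mul_le_mul h1 h2 (by linarith : (0:ℝ) ≤ 1 + ε * F' v)
            (mul_nonneg (Real.exp_nonneg _) (hφ0 v))
      _ = Real.exp (a * |u - v| + 2 * M₂ * |ε| * |u - v|) * φ v * (1 + ε * F' u) := by
          rw [Real.exp_add]; ring
      _ ≤ Real.exp ((a * (1 + C * |ε|) + C * |ε|) * |x - y|) * φ v * (1 + ε * F' u) := by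
          have hmul : Real.exp (a * |u - v| + 2 * M₂ * |ε| * |u - v|) ≤
              Real.exp ((a * (1 + C * |ε|) + C * |ε|) * |x - y|) := Real.exp_le_exp.mpr hexp
          have hnn : 0 ≤ φ v * (1 + ε * F' u) :=
            mul_nonneg (hφ0 v) (by linarith : (0:ℝ) ≤ 1 + ε * F' u)
          calc Real.exp (a * |u - v| + 2 * M₂ * |ε| * |u - v|) * φ v * (1 + ε * F' u)
              = Real.exp (a * |u - v| + 2 * M₂ * |ε| * |u - v|) * (φ v * (1 + ε * F' u)) := by
                ring
            _ ≤ Real.exp ((a * (1 + C * |ε|) + C * |ε|) * |x - y|) * (φ v * (1 + ε * F' u)) :=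
                mul_le_mul_of_nonneg_right hmul hnn
            _ = Real.exp ((a * (1 + C * |ε|) + C * |ε|) * |x - y|) * φ v * (1 + ε * F' u) := by
                ring
end

section
/- There exist ε₀ > 0 and C ≥ 0, depending only on h, such that for every ε with |ε| ≤ ε₀ and every a > 0 with (1/2)·(a·(1 + C|ε|) + C|ε|) < a, setting λ := (a·(1 + C|ε|) + C|ε|)/(2a) ∈ (0,1), every φ ∈ V_a with ∫₀¹ φ = 1 satisfies T_ε φ ∈ V_{λa}; that is, the self-consistent transfer operator maps the cone V_a strictly inside itself. -/
open MeasureTheory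

/-- A doubly periodic, jointly continuous function of two real variables is bounded. -/
lemma bdd_of_doubly_periodic {F : ℝ → ℝ → ℝ} (hc : Continuous (Function.uncurry F))
    (hpx : ∀ x y, F (x+1) y = F x y) (hpy : ∀ x y, F x (y+1) = F x y) :
    ∃ M : ℝ, 0 ≤ M ∧ ∀ x y, |F x y| ≤ M := by
  obtain ⟨M, hM⟩ := ((isCompact_Icc (a := (0:ℝ)) (b := 1)).prod
    (isCompact_Icc (a := (0:ℝ)) (b := 1))).exists_bound_of_continuousOn hc.continuousOn
  refine ⟨max M 0, le_max_right _ _, fun x y => ?_⟩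
  have p1 : Function.Periodic (fun t => F t y) 1 := fun t => hpx t y
  have p2 : Function.Periodic (fun t => F (Int.fract x) t) 1 := fun t => hpy _ t
  have e1 : F x y = F (Int.fract x) y := by
    have h0 := p1.sub_int_mul_eq (x := x) ⌊x⌋
    rw [mul_one, Int.self_sub_floor] at h0
    exact h0.symm
  have e2 : F (Int.fract x) y = F (Int.fract x) (Int.fract y) := by
    have h0 := p2.sub_int_mul_eq (x := y) ⌊y⌋
    rw [mul_one, Int.self_sub_floor] at h0
    exact h0.symm
  rw [e1, e2]
  have hmem : (Int.fract x, Int.fract y) ∈ Set.Icc (0:ℝ) 1 ×ˢ Set.Icc (0:ℝ) 1 :=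
    ⟨⟨Int.fract_nonneg x, (Int.fract_lt_one x).le⟩,
     ⟨Int.fract_nonneg y, (Int.fract_lt_one y).le⟩⟩
  exact le_trans (hM _ hmem) (le_max_left _ _)

/-- The doubling transfer operator halves the cone parameter. -/
lemma Pop_memV {ψ : ℝ → ℝ} {b : ℝ} (hc : Continuous ψ) (hpos : ∀ x, 0 < ψ x)
    (hper : ∀ x, ψ (x+1) = ψ x)
    (hcone : ∀ x y, ψ x ≤ Real.exp (2 * b * |x - y|) * ψ y) :
    memV b (Pop ψ) := by
  refine ⟨?_, ?_, ?_, ?_⟩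
  · exact (continuous_const.mul (hc.comp (continuous_id.div_const 2))).add
      (continuous_const.mul (hc.comp ((continuous_id.add continuous_const).div_const 2)))
  · intro x
    have h1 := hpos (x/2)
    have h2 := hpos ((x+1)/2)
    simp only [Pop]
    nlinarith
  · intro x
    have e : (x+1+1)/2 = x/2 + 1 := by ring
    simp only [Pop, e, hper]
    ring
  · intro x y
    have e1 : |x/2 - y/2| = |x - y|/2 := by
      rw [show x/2 - y/2 = (x-y)/2 by ring, abs_div, abs_two]
    have e2 : |(x+1)/2 - (y+1)/2| = |x - y|/2 := by
      rw [show (x+1)/2 - (y+1)/2 = (x-y)/2 by ring, abs_div, abs_two]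
    have k1 := hcone (x/2) (y/2)
    have k2 := hcone ((x+1)/2) ((y+1)/2)
    rw [e1] at k1
    rw [e2] at k2
    have e3 : 2 * b * (|x - y|/2) = b * |x - y| := by ring
    rw [e3] at k1 k2
    simp only [Pop]
    nlinarith [Real.exp_pos (b * |x - y|), hpos (y/2), hpos ((y+1)/2)]

set_option maxHeartbeats 1000000 in
/-- For small `ε` and suitable `a`, the self-consistent transfer operator maps the cone
`V_a` strictly inside itself: `T_ε φ ∈ V_{λa}` with `λ = (a(1 + C|ε|) + C|ε|)/(2a) < 1`. -/
theorem stmt10 (h : ℝ → ℝ → ℝ) (hC2 : ContDiff ℝ 2 (Function.uncurry h))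
    (hper : periodicH h) :
    ∃ ε₀ > (0:ℝ), ∃ C ≥ (0:ℝ), ∀ ε : ℝ, |ε| ≤ ε₀ → ∀ a : ℝ, 0 < a →
      (1/2) * (a * (1 + C * |ε|) + C * |ε|) < a →
      ∀ lam : ℝ, lam = (a * (1 + C * |ε|) + C * |ε|) / (2 * a) →
        (0 < lam ∧ lam < 1) ∧
        ∀ φ : ℝ → ℝ, memV a φ → (∫ x in (0:ℝ)..1, φ x) = 1 →
          memV (lam * a) (Tsc h ε φ) := by
  obtain ⟨hpx, hpy⟩ := hper
  -- the partial derivatives of `h` in the first variable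
  set G : ℝ × ℝ → ℝ := fun p => fderiv ℝ (Function.uncurry h) p (1, 0) with hGdef
  have hdiffh : Differentiable ℝ (Function.uncurry h) := hC2.differentiable (by norm_num)
  have hGc1 : ContDiff ℝ 1 G := by
    have h1 : ContDiff ℝ 1 (fderiv ℝ (Function.uncurry h)) := hC2.fderiv_right (by norm_num)
    exact (ContinuousLinearMap.apply ℝ ℝ ((1:ℝ), (0:ℝ))).contDiff.comp h1
  have hDer : ∀ x y, HasDerivAt (fun t => h t y) (G (x, y)) x := by
    intro x y
    have h1 : HasDerivAt (fun t : ℝ => (t, y)) ((1:ℝ), (0:ℝ)) x :=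
      HasDerivAt.prodMk (hasDerivAt_id x) (hasDerivAt_const x y)
    exact (hdiffh (x, y)).hasFDerivAt.comp_hasDerivAt x h1
  set G2 : ℝ × ℝ → ℝ := fun p => fderiv ℝ G p (1, 0) with hG2def
  have hG2c : Continuous G2 := by
    have h1 : Continuous (fderiv ℝ G) := hGc1.continuous_fderiv one_ne_zero
    exact (ContinuousLinearMap.apply ℝ ℝ ((1:ℝ), (0:ℝ))).continuous.comp h1
  have hDer2 : ∀ x y, HasDerivAt (fun t => G (t, y)) (G2 (x, y)) x := by
    intro x y
    have h1 : HasDerivAt (fun t : ℝ => (t, y)) ((1:ℝ), (0:ℝ)) x :=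
      HasDerivAt.prodMk (hasDerivAt_id x) (hasDerivAt_const x y)
    exact ((hGc1.differentiable one_ne_zero) (x, y)).hasFDerivAt.comp_hasDerivAt x h1
  -- periodicity of the derivatives
  have hGx : ∀ x y, G (x+1, y) = G (x, y) := by
    intro x y
    have e1 : G (x+1, y) = deriv (fun t => h t y) (x+1) := (hDer (x+1) y).deriv.symm
    have e2 : G (x, y) = deriv (fun t => h t y) x := (hDer x y).deriv.symm
    rw [e1, e2, ← deriv_comp_add_const (fun t => h t y) 1 x]
    congr 1
    funext t
    exact hpx t y
  have hGy : ∀ x y, G (x, y+1) = G (x, y) := by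
    intro x y
    have e1 : G (x, y+1) = deriv (fun t => h t (y+1)) x := (hDer x (y+1)).deriv.symm
    have e2 : G (x, y) = deriv (fun t => h t y) x := (hDer x y).deriv.symm
    rw [e1, e2]
    congr 1
    funext t
    exact hpy t y
  have hG2x : ∀ x y, G2 (x+1, y) = G2 (x, y) := by
    intro x y
    have e1 : G2 (x+1, y) = deriv (fun t => G (t, y)) (x+1) := (hDer2 (x+1) y).deriv.symm
    have e2 : G2 (x, y) = deriv (fun t => G (t, y)) x := (hDer2 x y).deriv.symm
    rw [e1, e2, ← deriv_comp_add_const (fun t => G (t, y)) 1 x]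
    congr 1
    funext t
    exact hGx t y
  have hG2y : ∀ x y, G2 (x, y+1) = G2 (x, y) := by
    intro x y
    have e1 : G2 (x, y+1) = deriv (fun t => G (t, y+1)) x := (hDer2 x (y+1)).deriv.symm
    have e2 : G2 (x, y) = deriv (fun t => G (t, y)) x := (hDer2 x y).deriv.symm
    rw [e1, e2]
    congr 1
    funext t
    exact hGy t y
  -- global bounds
  obtain ⟨K₀, hK₀0, hK₀⟩ := bdd_of_doubly_periodic hC2.continuous hpx hpy
  obtain ⟨K₁, hK₁0, hK₁⟩ := bdd_of_doubly_periodic (F := fun x y => G (x, y))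
    hGc1.continuous hGx hGy
  obtain ⟨K₂, hK₂0, hK₂⟩ := bdd_of_doubly_periodic (F := fun x y => G2 (x, y))
    hG2c hG2x hG2y
  have hGlip : ∀ y u v, |G (u, y) - G (v, y)| ≤ K₂ * |u - v| := by
    intro y u v
    have := Convex.norm_image_sub_le_of_norm_hasDerivWithin_le
      (f := fun t => G (t, y)) (f' := fun t => G2 (t, y))
      (fun t _ => (hDer2 t y).hasDerivWithinAt)
      (fun t _ => by rw [Real.norm_eq_abs]; exact hK₂ t y)
      convex_univ (Set.mem_univ v) (Set.mem_univ u)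
    simpa [Real.norm_eq_abs] using this
  -- the constants
  refine ⟨1/(2*(K₁+1)), by positivity, 2*K₁ + 4*K₂ + 1, by positivity, ?_⟩
  intro ε hε a ha hsmall lam hlam
  have hεnn : (0:ℝ) ≤ |ε| := abs_nonneg ε
  have hεK₁ : |ε| * K₁ ≤ 1/2 := by
    have h1 : |ε| * K₁ ≤ (1/(2*(K₁+1))) * K₁ := mul_le_mul_of_nonneg_right hε hK₁0
    have h2 : (1/(2*(K₁+1))) * K₁ ≤ 1/2 := by
      rw [div_mul_eq_mul_div, one_mul, div_le_div_iff₀ (by linarith) (by norm_num)]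
      linarith
    linarith
  have hApos : 0 < a * (1 + (2*K₁+4*K₂+1) * |ε|) + (2*K₁+4*K₂+1) * |ε| := by
    have : (0:ℝ) ≤ (2*K₁+4*K₂+1) * |ε| := by positivity
    nlinarith
  refine ⟨⟨?_, ?_⟩, ?_⟩
  · rw [hlam]
    exact div_pos hApos (by linarith)
  · rw [hlam, div_lt_one (by linarith)]
    linarith
  intro φ hφ hint
  obtain ⟨φc, φpos, φper, φcone⟩ := hφ
  have hφnonneg : ∀ y, 0 ≤ φ y := fun y => (φpos y).le
  set H : ℝ → ℝ := fun x => ∫ y in (0:ℝ)..1, h x y * φ y with hHdef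
  set H1 : ℝ → ℝ := fun x => ∫ y in (0:ℝ)..1, G (x, y) * φ y with hH1def
  have hgval : ∀ x, gmap h ε φ x = x + ε * H x := fun x => by simp only [gmap, hHdef]
  have hgeq : gmap h ε φ = fun x => x + ε * H x := funext hgval
  have hcont_hx : ∀ x, Continuous (fun y => h x y * φ y) := fun x =>
    (hC2.continuous.comp (Continuous.prodMk_right x)).mul φc
  have hcont_Gx : ∀ x, Continuous (fun y => G (x, y) * φ y) := fun x =>
    (hGc1.continuous.comp (Continuous.prodMk_right x)).mul φc
  -- derivative of `H`
  have hHD : ∀ x, HasDerivAt H (H1 x) x := by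
    intro x₀
    have key := intervalIntegral.hasDerivAt_integral_of_dominated_loc_of_deriv_le
      (F := fun x y => h x y * φ y) (F' := fun x y => G (x, y) * φ y)
      (bound := fun y => K₁ * φ y) (μ := volume) (a := (0:ℝ)) (b := 1) (x₀ := x₀)
      (s := Metric.ball x₀ 1) (Metric.ball_mem_nhds x₀ one_pos)
      (Filter.Eventually.of_forall fun x => (hcont_hx x).aestronglyMeasurable)
      ((hcont_hx x₀).intervalIntegrable 0 1)
      ((hcont_Gx x₀).aestronglyMeasurable)
      (Filter.Eventually.of_forall fun t _ x _ => by
        rw [Real.norm_eq_abs, abs_mul, abs_of_nonneg (hφnonneg t)]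
        exact mul_le_mul_of_nonneg_right (hK₁ x t) (hφnonneg t))
      ((continuous_const.mul φc).intervalIntegrable 0 1)
      (Filter.Eventually.of_forall fun t _ x _ => (hDer x t).mul_const (φ t))
    rw [hHdef, hH1def]
    exact key.2
  -- bounds for `H` and `H1`
  have hHbd : ∀ x, |H x| ≤ K₀ := by
    intro x
    simp only [hHdef]
    calc |∫ y in (0:ℝ)..1, h x y * φ y| ≤ ∫ y in (0:ℝ)..1, |h x y * φ y| :=
          intervalIntegral.abs_integral_le_integral_abs zero_le_one
      _ ≤ ∫ y in (0:ℝ)..1, K₀ * φ y := by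
          apply intervalIntegral.integral_mono_on zero_le_one
            ((hcont_hx x).abs.intervalIntegrable 0 1)
            ((continuous_const.mul φc).intervalIntegrable 0 1)
          intro y _
          rw [abs_mul, abs_of_nonneg (hφnonneg y)]
          exact mul_le_mul_of_nonneg_right (hK₀ x y) (hφnonneg y)
      _ = K₀ := by rw [intervalIntegral.integral_const_mul, hint, mul_one]
  have hH1bd : ∀ x, |H1 x| ≤ K₁ := by
    intro x
    simp only [hH1def]
    calc |∫ y in (0:ℝ)..1, G (x, y) * φ y| ≤ ∫ y in (0:ℝ)..1, |G (x, y) * φ y| :=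
          intervalIntegral.abs_integral_le_integral_abs zero_le_one
      _ ≤ ∫ y in (0:ℝ)..1, K₁ * φ y := by
          apply intervalIntegral.integral_mono_on zero_le_one
            ((hcont_Gx x).abs.intervalIntegrable 0 1)
            ((continuous_const.mul φc).intervalIntegrable 0 1)
          intro y _
          rw [abs_mul, abs_of_nonneg (hφnonneg y)]
          exact mul_le_mul_of_nonneg_right (hK₁ x y) (hφnonneg y)
      _ = K₁ := by rw [intervalIntegral.integral_const_mul, hint, mul_one]
  have hH1lip : ∀ u v, |H1 u - H1 v| ≤ K₂ * |u - v| := by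
    intro u v
    have c1 : Continuous (fun y : ℝ => G (u, y)) := hGc1.continuous.comp (Continuous.prodMk_right u)
    have c2 : Continuous (fun y : ℝ => G (v, y)) := hGc1.continuous.comp (Continuous.prodMk_right v)
    have e : H1 u - H1 v = ∫ y in (0:ℝ)..1, (G (u, y) - G (v, y)) * φ y := by
      simp only [hH1def]
      rw [← intervalIntegral.integral_sub ((hcont_Gx u).intervalIntegrable 0 1)
        ((hcont_Gx v).intervalIntegrable 0 1)]
      congr 1
      funext y
      ring
    rw [e]
    calc |∫ y in (0:ℝ)..1, (G (u, y) - G (v, y)) * φ y|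
        ≤ ∫ y in (0:ℝ)..1, |(G (u, y) - G (v, y)) * φ y| :=
          intervalIntegral.abs_integral_le_integral_abs zero_le_one
      _ ≤ ∫ y in (0:ℝ)..1, (K₂ * |u - v|) * φ y := by
          apply intervalIntegral.integral_mono_on zero_le_one
            ((((c1.sub c2).mul φc).abs).intervalIntegrable 0 1)
            ((continuous_const.mul φc).intervalIntegrable 0 1)
          intro y _
          simp only [Pi.mul_apply, Pi.sub_apply]
          rw [abs_mul, abs_of_nonneg (hφnonneg y)]
          exact mul_le_mul_of_nonneg_right (hGlip y u v) (hφnonneg y)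
      _ = K₂ * |u - v| := by rw [intervalIntegral.integral_const_mul, hint, mul_one]
  -- periodicity of `H`, `H1`
  have hHper : ∀ x, H (x+1) = H x := by
    intro x
    simp only [hHdef]
    congr 1
    funext y
    rw [hpx]
  have hH1per : ∀ x, H1 (x+1) = H1 x := by
    intro x
    simp only [hH1def]
    congr 1
    funext y
    rw [hGx]
  -- properties of the coupled map `g`
  have hgD : ∀ x, HasDerivAt (gmap h ε φ) (1 + ε * H1 x) x := by
    intro x
    rw [hgeq]
    exact (hasDerivAt_id x).add ((hHD x).const_mul ε)
  have hεH1 : ∀ x, |ε * H1 x| ≤ |ε| * K₁ := fun x => by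
    rw [abs_mul]; exact mul_le_mul_of_nonneg_left (hH1bd x) (abs_nonneg ε)
  have hglow : ∀ x, 1 - |ε| * K₁ ≤ 1 + ε * H1 x := by
    intro x; have := (abs_le.1 (hεH1 x)).1; linarith
  have hghigh : ∀ x, 1 + ε * H1 x ≤ 1 + |ε| * K₁ := by
    intro x; have := (abs_le.1 (hεH1 x)).2; linarith
  have hghalf : ∀ x, (1:ℝ)/2 ≤ 1 + ε * H1 x := fun x => by linarith [hglow x, hεK₁]
  have hmono : StrictMono (gmap h ε φ) := by
    apply strictMono_of_deriv_pos
    intro x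
    rw [(hgD x).deriv]
    linarith [hghalf x]
  have hinj := hmono.injective
  have hgdiff : Differentiable ℝ (gmap h ε φ) := fun x => (hgD x).differentiableAt
  have hgcont : Continuous (gmap h ε φ) := hgdiff.continuous
  have hεH : ∀ x, |ε * H x| ≤ |ε| * K₀ := fun x => by
    rw [abs_mul]; exact mul_le_mul_of_nonneg_left (hHbd x) (abs_nonneg ε)
  have hsurj : Function.Surjective (gmap h ε φ) := by
    intro z
    have hR : (0:ℝ) ≤ |ε| * K₀ := by positivity
    have h1 : gmap h ε φ (z - (|ε| * K₀ + 1)) ≤ z := by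
      rw [hgval]
      have := (abs_le.1 (hεH (z - (|ε| * K₀ + 1)))).2
      linarith
    have h2 : z ≤ gmap h ε φ (z + (|ε| * K₀ + 1)) := by
      rw [hgval]
      have := (abs_le.1 (hεH (z + (|ε| * K₀ + 1)))).1
      linarith
    obtain ⟨x, _, hx⟩ := intermediate_value_Icc
      (by linarith : z - (|ε| * K₀ + 1) ≤ z + (|ε| * K₀ + 1)) hgcont.continuousOn ⟨h1, h2⟩
    exact ⟨x, hx⟩
  have hleft : ∀ x, Function.invFun (gmap h ε φ) (gmap h ε φ x) = x :=
    fun x => Function.leftInverse_invFun hinj x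
  have hright : ∀ x, gmap h ε φ (Function.invFun (gmap h ε φ) x) = x :=
    fun x => Function.rightInverse_invFun hsurj x
  -- bi-Lipschitz estimates for `g`
  have hlow : ∀ u v, u ≤ v → (1 - |ε| * K₁) * (v - u) ≤ gmap h ε φ v - gmap h ε φ u := by
    intro u v huv
    have hk : ∀ x, HasDerivAt (fun t => gmap h ε φ t - (1 - |ε| * K₁) * t)
        (1 + ε * H1 x - (1 - |ε| * K₁) * 1) x :=
      fun x => (hgD x).sub ((hasDerivAt_id x).const_mul (1 - |ε| * K₁))
    have hm : Monotone (fun t => gmap h ε φ t - (1 - |ε| * K₁) * t) := by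
      apply monotone_of_deriv_nonneg (fun x => (hk x).differentiableAt)
      intro x
      rw [(hk x).deriv]
      have := hglow x
      nlinarith
    have := hm huv
    simp only at this
    nlinarith
  have hinvbound : ∀ x y, Function.invFun (gmap h ε φ) x ≤ Function.invFun (gmap h ε φ) y →
      Function.invFun (gmap h ε φ) y - Function.invFun (gmap h ε φ) x
        ≤ (1 + 2 * K₁ * |ε|) * |x - y| := by
    intro x y hc
    have h1 := hlow _ _ hc
    rw [hright, hright] at h1
    have h2 : y - x ≤ |x - y| := by rw [abs_sub_comm]; exact le_abs_self _
    have h3 : 0 ≤ Function.invFun (gmap h ε φ) y - Function.invFun (gmap h ε φ) x := by linarith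
    have h4 : (0:ℝ) ≤ |x - y| := abs_nonneg _
    have key : (1 - |ε| * K₁) * (Function.invFun (gmap h ε φ) y -
        Function.invFun (gmap h ε φ) x) ≤ |x - y| := le_trans h1 h2
    have hint1 := mul_le_mul_of_nonneg_left key (show (0:ℝ) ≤ 1 + 2 * K₁ * |ε| by positivity)
    have hint2 : 0 ≤ (|ε| * K₁) * (1 - 2 * (|ε| * K₁)) *
        (Function.invFun (gmap h ε φ) y - Function.invFun (gmap h ε φ) x) :=
      mul_nonneg (mul_nonneg (mul_nonneg hεnn hK₁0) (by linarith)) h3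
    nlinarith [hint1, hint2]
  have hinvlip : ∀ x y, |Function.invFun (gmap h ε φ) x - Function.invFun (gmap h ε φ) y|
      ≤ (1 + 2 * K₁ * |ε|) * |x - y| := by
    intro x y
    rcases le_total (Function.invFun (gmap h ε φ) x) (Function.invFun (gmap h ε φ) y) with hc | hc
    · rw [abs_of_nonpos (by linarith)]
      have := hinvbound x y hc
      linarith
    · rw [abs_of_nonneg (by linarith)]
      have := hinvbound y x hc
      rw [abs_sub_comm] at this
      linarith
  have hinvcont : Continuous (Function.invFun (gmap h ε φ)) := by
    have hL : LipschitzWith (Real.toNNReal (1 + 2 * K₁ * |ε|))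
        (Function.invFun (gmap h ε φ)) := by
      apply LipschitzWith.of_dist_le_mul
      intro x y
      rw [Real.dist_eq, Real.dist_eq, Real.coe_toNNReal _ (by positivity)]
      exact hinvlip x y
    exact hL.continuous
  have hH1cont : Continuous H1 := by
    have hL : LipschitzWith (Real.toNNReal K₂) H1 := by
      apply LipschitzWith.of_dist_le_mul
      intro u v
      rw [Real.dist_eq, Real.dist_eq, Real.coe_toNNReal _ hK₂0]
      exact hH1lip u v
    exact hL.continuous
  have hgper : ∀ x, gmap h ε φ (x+1) = gmap h ε φ x + 1 := by
    intro x
    rw [hgval (x+1), hgval x, hHper x]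
    ring
  have hinvper : ∀ x, Function.invFun (gmap h ε φ) (x+1)
      = Function.invFun (gmap h ε φ) x + 1 := by
    intro x
    apply hinj
    rw [hright, hgper, hright]
  -- the transfer operator has an explicit form
  have hLeq : Lop h ε φ φ = fun x => φ (Function.invFun (gmap h ε φ) x) /
      (1 + ε * H1 (Function.invFun (gmap h ε φ) x)) := by
    funext x
    simp only [Lop]
    rw [(hgD _).deriv]
  -- cone contraction estimate for the explicit form
  have hψcone : ∀ x y,
      φ (Function.invFun (gmap h ε φ) x) / (1 + ε * H1 (Function.invFun (gmap h ε φ) x)) ≤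
      Real.exp (2 * (lam * a) * |x - y|) *
        (φ (Function.invFun (gmap h ε φ) y) /
          (1 + ε * H1 (Function.invFun (gmap h ε φ) y))) := by
    intro x y
    set u := Function.invFun (gmap h ε φ) x with hu
    set v := Function.invFun (gmap h ε φ) y with hv
    have hgu : (1:ℝ)/2 ≤ 1 + ε * H1 u := hghalf u
    have hgv : (1:ℝ)/2 ≤ 1 + ε * H1 v := hghalf v
    have hgupos : (0:ℝ) < 1 + ε * H1 u := by linarith
    have hgvpos : (0:ℝ) < 1 + ε * H1 v := by linarith
    have hφu := φpos u
    have hφv := φpos v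
    have hduv : |u - v| ≤ (1 + 2 * K₁ * |ε|) * |x - y| := hinvlip x y
    have s1 := φcone u v
    have s2 : 1 + ε * H1 v ≤ (1 + ε * H1 u) * Real.exp (2 * K₂ * |ε| * |u - v|) := by
      have d1 : |ε * (H1 v - H1 u)| ≤ |ε| * (K₂ * |u - v|) := by
        rw [abs_mul]
        apply mul_le_mul_of_nonneg_left _ (abs_nonneg ε)
        have := hH1lip v u
        rw [abs_sub_comm u v]
        exact this
      have c0 : (0:ℝ) ≤ 2 * K₂ * |ε| * |u - v| := by positivity
      have c1 := mul_le_mul_of_nonneg_right hgu c0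
      have d2 : 1 + ε * H1 v ≤ (1 + ε * H1 u) * (1 + 2 * K₂ * |ε| * |u - v|) := by
        have := (abs_le.1 d1).2
        nlinarith [c1]
      refine le_trans d2 ?_
      apply mul_le_mul_of_nonneg_left _ hgupos.le
      have := Real.add_one_le_exp (2 * K₂ * |ε| * |u - v|)
      linarith
    have t2 : φ v ≤ (φ v / (1 + ε * H1 v)) * ((1 + ε * H1 u) *
        Real.exp (2 * K₂ * |ε| * |u - v|)) := by
      calc φ v = (φ v / (1 + ε * H1 v)) * (1 + ε * H1 v) :=
            (div_mul_cancel₀ _ hgvpos.ne').symm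
        _ ≤ _ := mul_le_mul_of_nonneg_left s2 (div_pos hφv hgvpos).le
    have e2 : (a + 2 * K₂ * |ε|) * |u - v| ≤ 2 * (lam * a) * |x - y| := by
      have hA2 : a * (1 + (2*K₁+4*K₂+1) * |ε|) + (2*K₁+4*K₂+1) * |ε| = 2 * (lam * a) := by
        rw [hlam]
        field_simp
      have hsc : (a + 2 * K₂ * |ε|) * (1 + 2 * K₁ * |ε|)
          ≤ a * (1 + (2*K₁+4*K₂+1) * |ε|) + (2*K₁+4*K₂+1) * |ε| := by
        nlinarith [mul_le_mul_of_nonneg_left hεK₁ (mul_nonneg hK₂0 hεnn),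
          mul_nonneg hK₂0 hεnn, mul_nonneg hK₁0 hεnn,
          mul_nonneg (mul_nonneg ha.le hK₂0) hεnn, mul_nonneg ha.le hεnn,
          mul_nonneg (mul_nonneg ha.le hK₁0) hεnn]
      have hxy : (0:ℝ) ≤ |x - y| := abs_nonneg _
      calc (a + 2 * K₂ * |ε|) * |u - v|
          ≤ (a + 2 * K₂ * |ε|) * ((1 + 2 * K₁ * |ε|) * |x - y|) :=
            mul_le_mul_of_nonneg_left hduv (by positivity)
        _ = ((a + 2 * K₂ * |ε|) * (1 + 2 * K₁ * |ε|)) * |x - y| := by ring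
        _ ≤ (a * (1 + (2*K₁+4*K₂+1) * |ε|) + (2*K₁+4*K₂+1) * |ε|) * |x - y| :=
            mul_le_mul_of_nonneg_right hsc hxy
        _ = 2 * (lam * a) * |x - y| := by rw [hA2]
    calc φ u / (1 + ε * H1 u) ≤ (Real.exp (a * |u - v|) * φ v) / (1 + ε * H1 u) :=
          (div_le_div_iff_of_pos_right hgupos).2 s1
      _ ≤ (Real.exp (a * |u - v|) * ((φ v / (1 + ε * H1 v)) * ((1 + ε * H1 u) *
            Real.exp (2 * K₂ * |ε| * |u - v|)))) / (1 + ε * H1 u) :=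
          (div_le_div_iff_of_pos_right hgupos).2 (mul_le_mul_of_nonneg_left t2 (Real.exp_pos _).le)
      _ = Real.exp (a * |u - v|) * Real.exp (2 * K₂ * |ε| * |u - v|) *
            (φ v / (1 + ε * H1 v)) := by
          field_simp
      _ = Real.exp ((a + 2 * K₂ * |ε|) * |u - v|) * (φ v / (1 + ε * H1 v)) := by
          rw [← Real.exp_add]
          congr 1
          ring
      _ ≤ Real.exp (2 * (lam * a) * |x - y|) * (φ v / (1 + ε * H1 v)) :=
          mul_le_mul_of_nonneg_right (Real.exp_le_exp.2 e2) (div_pos hφv hgvpos).le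
  -- remaining cone properties
  have hψc : Continuous (fun x => φ (Function.invFun (gmap h ε φ) x) /
      (1 + ε * H1 (Function.invFun (gmap h ε φ) x))) := by
    apply Continuous.div (φc.comp hinvcont)
      (continuous_const.add (continuous_const.mul (hH1cont.comp hinvcont)))
    intro x
    have hx := hghalf (Function.invFun (gmap h ε φ) x)
    exact (by linarith : (0:ℝ) < 1 + ε * H1 (Function.invFun (gmap h ε φ) x)).ne'
  have hψpos : ∀ x, 0 < φ (Function.invFun (gmap h ε φ) x) /
      (1 + ε * H1 (Function.invFun (gmap h ε φ) x)) := fun x =>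
    div_pos (φpos _) (by linarith [hghalf (Function.invFun (gmap h ε φ) x)])
  have hψper : ∀ x, (fun x => φ (Function.invFun (gmap h ε φ) x) /
      (1 + ε * H1 (Function.invFun (gmap h ε φ) x))) (x+1) =
      (fun x => φ (Function.invFun (gmap h ε φ) x) /
      (1 + ε * H1 (Function.invFun (gmap h ε φ) x))) x := by
    intro x
    simp only
    rw [hinvper, φper, hH1per]
  show memV (lam * a) (Pop (Lop h ε φ φ))
  rw [hLeq]
  exact Pop_memV hψc hψpos hψper hψcone
end

section
/- There exist ε₀ > 0 and C ≥ 0, depending only on h, such that for every ε with |ε| ≤ ε₀ and all 1-periodic, nonnegative, continuous functions φ₁, φ₂ : ℝ → ℝ with ∫₀¹ φ₁ = ∫₀¹ φ₂ = 1: the maps g_i := g_{ε,φ_i} (i = 1,2) are strictly increasing bijections of ℝ and sup_{x∈ℝ} |g₁^{-1}(x) − g₂^{-1}(x)| ≤ C·|ε|·sup_{x∈ℝ} |φ₁(x) − φ₂(x)|. -/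
open MeasureTheory

/-- For a 1-periodic function, the value equals the value at the fractional part. -/
lemma per_eq_fract {α : Type*} {f : ℝ → α} (hf : ∀ x, f (x + 1) = f x) (x : ℝ) :
    f x = f (Int.fract x) := by
  have hp : Function.Periodic f 1 := hf
  have := hp.sub_int_mul_eq (x := x) ⌊x⌋
  simp only [mul_one] at this
  rw [← this, Int.self_sub_floor]

/-- A doubly 1-periodic continuous real function on the plane is bounded above. -/
lemma bdd_of_per2 {f : ℝ × ℝ → ℝ} (hf : Continuous f)
    (h1 : ∀ x y, f (x + 1, y) = f (x, y)) (h2 : ∀ x y, f (x, y + 1) = f (x, y)) :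
    ∃ B, 0 ≤ B ∧ ∀ p : ℝ × ℝ, f p ≤ B := by
  obtain ⟨B, hB⟩ := (isCompact_Icc.prod isCompact_Icc :
      IsCompact (Set.Icc (0:ℝ) 1 ×ˢ Set.Icc (0:ℝ) 1)).exists_bound_of_continuousOn
      hf.continuousOn
  refine ⟨max B 0, le_max_right _ _, fun p => ?_⟩
  have key : f p = f (Int.fract p.1, Int.fract p.2) := by
    have e1 : f (p.1, p.2) = f (Int.fract p.1, p.2) :=
      per_eq_fract (f := fun x => f (x, p.2)) (fun x => h1 x p.2) p.1
    have e2 : f (Int.fract p.1, p.2) = f (Int.fract p.1, Int.fract p.2) :=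
      per_eq_fract (f := fun y => f (Int.fract p.1, y)) (fun y => h2 _ y) p.2
    rw [← e2, ← e1]
  have hmem : (Int.fract p.1, Int.fract p.2) ∈ Set.Icc (0:ℝ) 1 ×ˢ Set.Icc (0:ℝ) 1 := by
    constructor <;> exact ⟨Int.fract_nonneg _, (Int.fract_lt_one _).le⟩
  calc f p = f (Int.fract p.1, Int.fract p.2) := key
    _ ≤ |f (Int.fract p.1, Int.fract p.2)| := le_abs_self _
    _ ≤ B := hB _ hmem
    _ ≤ max B 0 := le_max_left _ _

/-- The derivative of a periodic function satisfies the same periodicity. -/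
lemma fderiv_per {H : ℝ × ℝ → ℝ} (hd : Differentiable ℝ H) {v : ℝ × ℝ}
    (hp : ∀ q, H (q + v) = H q) (p : ℝ × ℝ) :
    fderiv ℝ H (p + v) = fderiv ℝ H p := by
  have h1 : HasFDerivAt (fun q => H (q + v)) (fderiv ℝ H (p + v)) p := by
    have hc : HasFDerivAt (fun q : ℝ × ℝ => q + v)
        (ContinuousLinearMap.id ℝ (ℝ × ℝ)) p := (hasFDerivAt_id p).add_const v
    have := (hd (p + v)).hasFDerivAt.comp p hc
    rw [ContinuousLinearMap.comp_id] at this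
    exact this
  have h2 : (fun q => H (q + v)) = H := funext hp
  rw [h2] at h1
  exact (h1.fderiv).symm

/-- The inverses of the coupled maps associated to two densities are uniformly
`C|ε|`-close in terms of the uniform distance of the densities. -/
theorem stmt11 (h : ℝ → ℝ → ℝ) (hC1 : ContDiff ℝ 1 (Function.uncurry h))
    (hper : periodicH h) :
    ∃ ε₀ > (0:ℝ), ∃ C ≥ (0:ℝ), ∀ ε : ℝ, |ε| ≤ ε₀ →
      ∀ φ₁ φ₂ : ℝ → ℝ,
        (∀ x, φ₁ (x+1) = φ₁ x) → (∀ x, 0 ≤ φ₁ x) → Continuous φ₁ →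
        (∫ x in (0:ℝ)..1, φ₁ x) = 1 →
        (∀ x, φ₂ (x+1) = φ₂ x) → (∀ x, 0 ≤ φ₂ x) → Continuous φ₂ →
        (∫ x in (0:ℝ)..1, φ₂ x) = 1 →
        (StrictMono (gmap h ε φ₁) ∧ Function.Bijective (gmap h ε φ₁)) ∧
        (StrictMono (gmap h ε φ₂) ∧ Function.Bijective (gmap h ε φ₂)) ∧
        (⨆ x : ℝ, |Function.invFun (gmap h ε φ₁) x - Function.invFun (gmap h ε φ₂) x|)
          ≤ C * |ε| * ⨆ x : ℝ, |φ₁ x - φ₂ x| := by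
  obtain ⟨hper1, hper2⟩ := hper
  set H := Function.uncurry h with hH
  have hHc : Continuous H := hC1.continuous
  have hHd : Differentiable ℝ H := hC1.differentiable one_ne_zero
  -- bound M on |h|
  obtain ⟨M, hM0, hM⟩ := bdd_of_per2 (f := fun p => |H p|) hHc.abs
    (fun x y => by simp [hH, Function.uncurry, hper1])
    (fun x y => by simp [hH, Function.uncurry, hper2])
  -- bound L on the derivative
  have hDper1 : ∀ p : ℝ × ℝ, fderiv ℝ H (p + (1, 0)) = fderiv ℝ H p :=
    fderiv_per hHd (fun q => by
      show H (q.1 + 1, q.2 + 0) = H q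
      simp [hH, Function.uncurry, hper1])
  have hDper2 : ∀ p : ℝ × ℝ, fderiv ℝ H (p + (0, 1)) = fderiv ℝ H p :=
    fderiv_per hHd (fun q => by
      show H (q.1 + 0, q.2 + 1) = H q
      simp [hH, Function.uncurry, hper2])
  obtain ⟨L, hL0, hL⟩ := bdd_of_per2 (f := fun p => ‖fderiv ℝ H p‖)
    (hC1.continuous_fderiv one_ne_zero).norm
    (fun x y => by simpa using congrArg norm (hDper1 (x, y)))
    (fun x y => by simpa using congrArg norm (hDper2 (x, y)))
  -- h is Lipschitz with constant L
  have hLip : LipschitzWith L.toNNReal H := by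
    refine lipschitzWith_of_nnnorm_fderiv_le hHd (fun p => ?_)
    rw [← NNReal.coe_le_coe]
    simpa [Real.coe_toNNReal _ hL0] using hL p
  have hLipx : ∀ x x' y : ℝ, |h x y - h x' y| ≤ L * |x - x'| := by
    intro x x' y
    have := hLip.dist_le_mul (x, y) (x', y)
    simpa [hH, Function.uncurry, Prod.dist_eq, Real.dist_eq,
      Real.coe_toNNReal _ hL0] using this
  -- setup constants
  refine ⟨1 / (2 * (L + 1)), by positivity, 2 * M, by positivity, ?_⟩
  intro ε hε φ₁ φ₂ hp1 hn1 hc1 hi1 hp2 hn2 hc2 hi2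
  have hεL : |ε| * L ≤ 1 / 2 := by
    have h2 : |ε| * (2 * (L + 1)) ≤ 1 := by
      rw [← le_div_iff₀ (by positivity)]; exact hε
    nlinarith [abs_nonneg ε]
  -- integrability
  have hcx : ∀ x : ℝ, Continuous fun y => h x y := fun x =>
    hHc.comp (Continuous.prodMk_right x)
  have hint : ∀ (φ : ℝ → ℝ), Continuous φ → ∀ x : ℝ,
      IntervalIntegrable (fun y => h x y * φ y) volume 0 1 := fun φ hφ x =>
    ((hcx x).mul hφ).intervalIntegrable 0 1
  -- Lipschitz property of F in x
  have hFlip : ∀ (φ : ℝ → ℝ), Continuous φ → (∀ y, 0 ≤ φ y) →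
      (∫ x in (0:ℝ)..1, φ x) = 1 → ∀ x x' : ℝ,
      |(∫ y in (0:ℝ)..1, h x y * φ y) - ∫ y in (0:ℝ)..1, h x' y * φ y|
        ≤ L * |x - x'| := by
    intro φ hφ hφ0 hφ1 x x'
    rw [← intervalIntegral.integral_sub (hint φ hφ x) (hint φ hφ x')]
    have hre : ∀ y : ℝ, h x y * φ y - h x' y * φ y = (h x y - h x' y) * φ y := by
      intro y; ring
    simp_rw [hre]
    calc |∫ y in (0:ℝ)..1, (h x y - h x' y) * φ y|
        ≤ ∫ y in (0:ℝ)..1, |(h x y - h x' y) * φ y| :=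
          intervalIntegral.abs_integral_le_integral_abs zero_le_one
      _ ≤ ∫ y in (0:ℝ)..1, (L * |x - x'|) * φ y := by
          apply intervalIntegral.integral_mono_on zero_le_one
          · exact ((((hcx x).sub (hcx x')).mul hφ).abs).intervalIntegrable 0 1
          · exact (continuous_const.mul hφ).intervalIntegrable 0 1
          · intro y _
            rw [abs_mul, abs_of_nonneg (hφ0 y)]
            exact mul_le_mul_of_nonneg_right (hLipx x x' y) (hφ0 y)
      _ = L * |x - x'| := by
          rw [intervalIntegral.integral_const_mul, hφ1, mul_one]
  -- boundedness of F
  have hFbd : ∀ (φ : ℝ → ℝ), Continuous φ → (∀ y, 0 ≤ φ y) →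
      (∫ x in (0:ℝ)..1, φ x) = 1 → ∀ x : ℝ,
      |∫ y in (0:ℝ)..1, h x y * φ y| ≤ M := by
    intro φ hφ hφ0 hφ1 x
    calc |∫ y in (0:ℝ)..1, h x y * φ y|
        ≤ ∫ y in (0:ℝ)..1, |h x y * φ y| :=
          intervalIntegral.abs_integral_le_integral_abs zero_le_one
      _ ≤ ∫ y in (0:ℝ)..1, M * φ y := by
          apply intervalIntegral.integral_mono_on zero_le_one
          · exact (((hcx x).mul hφ).abs).intervalIntegrable 0 1
          · exact (continuous_const.mul hφ).intervalIntegrable 0 1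
          · intro y _
            rw [abs_mul, abs_of_nonneg (hφ0 y)]
            exact mul_le_mul_of_nonneg_right (hM (x, y)) (hφ0 y)
      _ = M := by rw [intervalIntegral.integral_const_mul, hφ1, mul_one]
  -- strict monotonicity
  have hmono : ∀ (φ : ℝ → ℝ), Continuous φ → (∀ y, 0 ≤ φ y) →
      (∫ x in (0:ℝ)..1, φ x) = 1 → StrictMono (gmap h ε φ) := by
    intro φ hφ hφ0 hφ1 a b hab
    simp only [gmap]
    set Fa := ∫ y in (0:ℝ)..1, h a y * φ y
    set Fb := ∫ y in (0:ℝ)..1, h b y * φ y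
    have h1 : |Fb - Fa| ≤ L * |b - a| := hFlip φ hφ hφ0 hφ1 b a
    rw [abs_of_pos (sub_pos.mpr hab)] at h1
    have h2 : |ε * (Fb - Fa)| ≤ |ε| * (L * (b - a)) := by
      rw [abs_mul]
      exact mul_le_mul_of_nonneg_left h1 (abs_nonneg ε)
    have h3 := (abs_le.mp h2).1
    have h4 : |ε| * L * (b - a) ≤ (1 / 2) * (b - a) :=
      mul_le_mul_of_nonneg_right hεL (sub_pos.mpr hab).le
    nlinarith [sub_pos.mpr hab]
  -- continuity and surjectivity
  have hgc : ∀ (φ : ℝ → ℝ), Continuous φ → (∀ y, 0 ≤ φ y) →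
      (∫ x in (0:ℝ)..1, φ x) = 1 → Continuous (gmap h ε φ) := by
    intro φ hφ hφ0 hφ1
    have hlipF : LipschitzWith L.toNNReal (fun x => ∫ y in (0:ℝ)..1, h x y * φ y) := by
      apply LipschitzWith.of_dist_le_mul
      intro x x'
      simpa [Real.dist_eq, Real.coe_toNNReal _ hL0] using hFlip φ hφ hφ0 hφ1 x x'
    exact continuous_id.add (continuous_const.mul hlipF.continuous)
  have hsurj : ∀ (φ : ℝ → ℝ), Continuous φ → (∀ y, 0 ≤ φ y) →
      (∫ x in (0:ℝ)..1, φ x) = 1 → Function.Surjective (gmap h ε φ) := by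
    intro φ hφ hφ0 hφ1
    apply (hgc φ hφ hφ0 hφ1).surjective
    · apply Filter.tendsto_atTop_mono (fun x => ?_)
        (Filter.tendsto_atTop_add_const_right _ (-(|ε| * M)) Filter.tendsto_id)
      have := (abs_le.mp (hFbd φ hφ hφ0 hφ1 x)).1
      have h2 : -(|ε| * M) ≤ ε * ∫ y in (0:ℝ)..1, h x y * φ y := by
        have := neg_abs_le (ε * ∫ y in (0:ℝ)..1, h x y * φ y)
        have h3 : |ε * ∫ y in (0:ℝ)..1, h x y * φ y| ≤ |ε| * M := by
          rw [abs_mul]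
          exact mul_le_mul_of_nonneg_left (hFbd φ hφ hφ0 hφ1 x) (abs_nonneg ε)
        linarith
      simp only [gmap, Filter.tendsto_id, id_eq]
      linarith
    · apply Filter.tendsto_atBot_mono (fun x => ?_)
        (Filter.tendsto_atBot_add_const_right _ (|ε| * M) Filter.tendsto_id)
      have h3 : |ε * ∫ y in (0:ℝ)..1, h x y * φ y| ≤ |ε| * M := by
        rw [abs_mul]
        exact mul_le_mul_of_nonneg_left (hFbd φ hφ hφ0 hφ1 x) (abs_nonneg ε)
      have := (abs_le.mp h3).2
      simp only [gmap, Filter.tendsto_id, id_eq]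
      linarith
  have hm1 := hmono φ₁ hc1 hn1 hi1
  have hm2 := hmono φ₂ hc2 hn2 hi2
  have hs1 := hsurj φ₁ hc1 hn1 hi1
  have hs2 := hsurj φ₂ hc2 hn2 hi2
  refine ⟨⟨hm1, hm1.injective, hs1⟩, ⟨hm2, hm2.injective, hs2⟩, ?_⟩
  -- the sup distance of densities
  set D := ⨆ y : ℝ, |φ₁ y - φ₂ y| with hD
  obtain ⟨B, hB0, hB⟩ := bdd_of_per2 (f := fun p : ℝ × ℝ => |φ₁ p.1 - φ₂ p.1|)
    (((hc1.comp continuous_fst).sub (hc2.comp continuous_fst)).abs)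
    (fun x y => by simp [hp1, hp2]) (fun x y => rfl)
  have hbdd : BddAbove (Set.range fun y : ℝ => |φ₁ y - φ₂ y|) := by
    refine ⟨B, ?_⟩
    rintro _ ⟨y, rfl⟩
    exact hB (y, 0)
  have hDle : ∀ y : ℝ, |φ₁ y - φ₂ y| ≤ D := fun y =>
    le_ciSup hbdd y
  have hD0 : 0 ≤ D := Real.iSup_nonneg fun y => abs_nonneg _
  -- difference of F's
  have hFdiff : ∀ x : ℝ,
      |(∫ y in (0:ℝ)..1, h x y * φ₁ y) - ∫ y in (0:ℝ)..1, h x y * φ₂ y| ≤ M * D := by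
    intro x
    rw [← intervalIntegral.integral_sub (hint φ₁ hc1 x) (hint φ₂ hc2 x)]
    have hre : ∀ y : ℝ, h x y * φ₁ y - h x y * φ₂ y = h x y * (φ₁ y - φ₂ y) := by
      intro y; ring
    simp_rw [hre]
    calc |∫ y in (0:ℝ)..1, h x y * (φ₁ y - φ₂ y)|
        ≤ ∫ y in (0:ℝ)..1, |h x y * (φ₁ y - φ₂ y)| :=
          intervalIntegral.abs_integral_le_integral_abs zero_le_one
      _ ≤ ∫ y in (0:ℝ)..1, M * D := by
          apply intervalIntegral.integral_mono_on zero_le_one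
          · exact (((hcx x).mul (hc1.sub hc2)).abs).intervalIntegrable 0 1
          · exact intervalIntegrable_const
          · intro y _
            rw [abs_mul]
            exact mul_le_mul (hM (x, y)) (hDle y) (abs_nonneg _) hM0
      _ = M * D := by simp
  -- pointwise bound for inverses
  have hpt : ∀ x : ℝ,
      |Function.invFun (gmap h ε φ₁) x - Function.invFun (gmap h ε φ₂) x|
        ≤ 2 * M * |ε| * D := by
    intro x
    set a := Function.invFun (gmap h ε φ₁) x with hadef
    set b := Function.invFun (gmap h ε φ₂) x with hbdef
    have ha : gmap h ε φ₁ a = x := Function.rightInverse_invFun hs1 x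
    have hb : gmap h ε φ₂ b = x := Function.rightInverse_invFun hs2 x
    simp only [gmap] at ha hb
    set F1a := ∫ y in (0:ℝ)..1, h a y * φ₁ y with hF1a
    set F2a := ∫ y in (0:ℝ)..1, h a y * φ₂ y with hF2a
    set F2b := ∫ y in (0:ℝ)..1, h b y * φ₂ y with hF2b
    have heq : a - b = ε * ((F2b - F2a) + (F2a - F1a)) := by
      have : a + ε * F1a = b + ε * F2b := by rw [ha, hb]
      linarith [this]
    have key : |a - b| ≤ |ε| * (L * |a - b|) + |ε| * (M * D) := by
      calc |a - b| = |ε| * |(F2b - F2a) + (F2a - F1a)| := by rw [heq, abs_mul]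
        _ ≤ |ε| * (|F2b - F2a| + |F2a - F1a|) :=
            mul_le_mul_of_nonneg_left (abs_add_le _ _) (abs_nonneg ε)
        _ ≤ |ε| * (L * |b - a| + M * D) := by
            have e1 : |F2b - F2a| ≤ L * |b - a| := hFlip φ₂ hc2 hn2 hi2 b a
            have e2 : |F2a - F1a| ≤ M * D := by
              have := hFdiff a
              rwa [abs_sub_comm] at this
            exact mul_le_mul_of_nonneg_left (add_le_add e1 e2) (abs_nonneg ε)
        _ = |ε| * (L * |a - b|) + |ε| * (M * D) := by
            rw [abs_sub_comm b a]; ring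
    have h4 : |ε| * L * |a - b| ≤ (1 / 2) * |a - b| :=
      mul_le_mul_of_nonneg_right hεL (abs_nonneg _)
    have h5 : |ε| * (M * D) ≥ 0 :=
      mul_nonneg (abs_nonneg ε) (mul_nonneg hM0 hD0)
    nlinarith [key]
  refine Real.iSup_le hpt ?_
  have : (0:ℝ) ≤ 2 * M * |ε| := by positivity
  exact mul_nonneg this hD0
end

section
/- There exist ε₀ > 0 and C ≥ 0, depending only on h, such that for every ε with |ε| ≤ ε₀ and all 1-periodic, nonnegative, continuous functions φ₁, φ₂ : ℝ → ℝ with ∫₀¹ φ₁ = ∫₀¹ φ₂ = 1, writing g_i := g_{ε,φ_i} (i = 1,2), one has sup_{x∈ℝ} |1/g₁'(x) − 1/g₂'(x)| ≤ C·|ε|·sup_{x∈ℝ} |φ₁(x) − φ₂(x)|. -/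
open MeasureTheory

/-- The reciprocals of the derivatives of the coupled maps associated to two densities are
uniformly `C|ε|`-close in terms of the uniform distance of the densities. -/
theorem stmt12 (h : ℝ → ℝ → ℝ) (hC1 : ContDiff ℝ 1 (Function.uncurry h))
    (hper : periodicH h) :
    ∃ ε₀ > (0:ℝ), ∃ C ≥ (0:ℝ), ∀ ε : ℝ, |ε| ≤ ε₀ →
      ∀ φ₁ φ₂ : ℝ → ℝ,
        (∀ x, φ₁ (x+1) = φ₁ x) → (∀ x, 0 ≤ φ₁ x) → Continuous φ₁ →
        (∫ x in (0:ℝ)..1, φ₁ x) = 1 →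
        (∀ x, φ₂ (x+1) = φ₂ x) → (∀ x, 0 ≤ φ₂ x) → Continuous φ₂ →
        (∫ x in (0:ℝ)..1, φ₂ x) = 1 →
        (⨆ x : ℝ, |1 / deriv (gmap h ε φ₁) x - 1 / deriv (gmap h ε φ₂) x|)
          ≤ C * |ε| * ⨆ x : ℝ, |φ₁ x - φ₂ x| := by
  classical
  set H : ℝ × ℝ → ℝ := Function.uncurry h with hHdef
  have hHc : Continuous H := hC1.continuous
  have hHd : Differentiable ℝ H := hC1.differentiable one_ne_zero
  set h' : ℝ → ℝ → ℝ := fun x y => fderiv ℝ H (x, y) ((1:ℝ), (0:ℝ)) with hh'def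
  -- continuity of h'
  have hc' : Continuous fun p : ℝ × ℝ => fderiv ℝ H p ((1:ℝ), (0:ℝ)) :=
    (hC1.continuous_fderiv one_ne_zero).clm_apply continuous_const
  -- pointwise derivative
  have hdiff : ∀ x y : ℝ, HasDerivAt (fun x => h x y) (h' x y) x := by
    intro x y
    have hxy : HasDerivAt (fun x : ℝ => ((x, y) : ℝ × ℝ)) ((1:ℝ), (0:ℝ)) x :=
      (hasDerivAt_id x).prodMk (hasDerivAt_const x y)
    exact (hHd (x, y)).hasFDerivAt.comp_hasDerivAt x hxy
  -- fderiv is periodic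
  have perfd : ∀ c : ℝ × ℝ, (∀ p, H (p + c) = H p) →
      ∀ p : ℝ × ℝ, fderiv ℝ H (p + c) = fderiv ℝ H p := by
    intro c hc p
    have h1 : HasFDerivAt H (fderiv ℝ H (p + c)) (p + c) := (hHd _).hasFDerivAt
    have h2 : HasFDerivAt (fun q => H (q + c)) (fderiv ℝ H (p + c)) p := by
      have := h1.comp p ((hasFDerivAt_id p).add_const c)
      exact this
    rw [funext hc] at h2
    exact (h2.fderiv).symm
  have per1 : ∀ x y, h' (x + 1) y = h' x y := by
    intro x y
    have := perfd ((1:ℝ), (0:ℝ)) (by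
      rintro ⟨a, b⟩
      show H (a + 1, b + 0) = H (a, b)
      simp only [add_zero]
      exact hper.1 a b) (x, y)
    simp only [hh'def]
    rw [show ((x + 1, y) : ℝ × ℝ) = (x, y) + (1, 0) by simp, this]
  have per2 : ∀ x y, h' x (y + 1) = h' x y := by
    intro x y
    have := perfd ((0:ℝ), (1:ℝ)) (by
      rintro ⟨a, b⟩
      show H (a + 0, b + 1) = H (a, b)
      simp only [add_zero]
      exact hper.2 a b) (x, y)
    simp only [hh'def]
    rw [show ((x, y + 1) : ℝ × ℝ) = (x, y) + (0, 1) by simp, this]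
  -- bound M on h'
  obtain ⟨M, hMK⟩ := isCompact_Icc.exists_bound_of_continuousOn
    (s := Set.Icc ((0:ℝ), (0:ℝ)) ((1:ℝ), (1:ℝ))) hc'.continuousOn
  have hM : ∀ x y, |h' x y| ≤ M := by
    intro x y
    have px : Function.Periodic (fun x => h' x y) 1 := fun a => per1 a y
    have py : Function.Periodic (fun t => h' (Int.fract x) t) 1 := fun a => per2 _ a
    have e1 : h' (Int.fract x) y = h' x y := by
      have := px.sub_int_mul_eq (x := x) ⌊x⌋
      simpa [mul_one, Int.self_sub_floor] using this
    have e2 : h' (Int.fract x) (Int.fract y) = h' (Int.fract x) y := by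
      have := py.sub_int_mul_eq (x := y) ⌊y⌋
      simpa [mul_one, Int.self_sub_floor] using this
    have hmem : ((Int.fract x, Int.fract y) : ℝ × ℝ) ∈
        Set.Icc ((0:ℝ), (0:ℝ)) ((1:ℝ), (1:ℝ)) := by
      constructor <;> constructor <;>
        simp [Int.fract_nonneg, (Int.fract_lt_one _).le]
    have := hMK _ hmem
    rw [Real.norm_eq_abs] at this
    calc |h' x y| = |h' (Int.fract x) (Int.fract y)| := by rw [e2, e1]
    _ ≤ M := this
  have hM0 : 0 ≤ M := le_trans (abs_nonneg _) (hM 0 0)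
  refine ⟨1 / (2 * (M + 1)), by positivity, 4 * M, by positivity, ?_⟩
  intro ε hε φ₁ φ₂ hp1 hn1 hc1 hi1 hp2 hn2 hc2 hi2
  -- sup of |φ₁ - φ₂|
  set ψ : ℝ → ℝ := fun x => |φ₁ x - φ₂ x| with hψdef
  have hψc : Continuous ψ := (hc1.sub hc2).abs
  have hψper : Function.Periodic ψ 1 := by
    intro a; simp only [hψdef, hp1, hp2]
  have hrange : Set.range ψ ⊆ ψ '' Set.Icc (0:ℝ) 1 := by
    rintro _ ⟨x, rfl⟩
    refine ⟨Int.fract x, ⟨Int.fract_nonneg x, (Int.fract_lt_one x).le⟩, ?_⟩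
    have := hψper.sub_int_mul_eq (x := x) ⌊x⌋
    simpa [mul_one, Int.self_sub_floor] using this
  have hbdd : BddAbove (Set.range ψ) :=
    ((isCompact_Icc.image hψc).bddAbove).mono hrange
  set S : ℝ := ⨆ x : ℝ, ψ x with hSdef
  have hS : ∀ y, ψ y ≤ S := fun y => le_ciSup hbdd y
  have hS0 : 0 ≤ S := le_trans (abs_nonneg _) (hS 0)
  -- continuity facts
  have hcontx : ∀ x : ℝ, Continuous fun y => h x y :=
    fun x => hHc.comp (continuous_const.prodMk continuous_id)
  have hcontx' : ∀ x : ℝ, Continuous fun y => h' x y :=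
    fun x => hc'.comp (continuous_const.prodMk continuous_id)
  -- derivative of the integral
  have key : ∀ φ : ℝ → ℝ, Continuous φ → (∀ t, 0 ≤ φ t) → ∀ x₀ : ℝ,
      HasDerivAt (fun x => ∫ y in (0:ℝ)..1, h x y * φ y)
        (∫ y in (0:ℝ)..1, h' x₀ y * φ y) x₀ := by
    intro φ hφc hφn x₀
    have := (intervalIntegral.hasDerivAt_integral_of_dominated_loc_of_deriv_le
      (F := fun x t => h x t * φ t) (F' := fun x t => h' x t * φ t)
      (x₀ := x₀) (a := 0) (b := 1) (bound := fun t => M * φ t)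
      (μ := volume) (s := Set.univ) Filter.univ_mem
      (Filter.Eventually.of_forall fun x =>
        ((hcontx x).mul hφc).aestronglyMeasurable.restrict)
      (((hcontx x₀).mul hφc).intervalIntegrable _ _)
      (((hcontx' x₀).mul hφc).aestronglyMeasurable.restrict)
      (ae_of_all _ fun t _ x _ => by
        rw [Real.norm_eq_abs, abs_mul, abs_of_nonneg (hφn t)]
        exact mul_le_mul_of_nonneg_right (hM x t) (hφn t))
      ((continuous_const.mul hφc).intervalIntegrable _ _)
      (ae_of_all _ fun t _ x _ => (hdiff x t).mul_const (φ t)))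
    exact this.2
  -- bound on the parametric integral
  have hDb : ∀ φ : ℝ → ℝ, Continuous φ → (∀ t, 0 ≤ φ t) →
      (∫ x in (0:ℝ)..1, φ x) = 1 → ∀ x, |∫ y in (0:ℝ)..1, h' x y * φ y| ≤ M := by
    intro φ hφc hφn hφi x
    have i1 : IntervalIntegrable (fun y => |h' x y * φ y|) volume 0 1 :=
      (((hcontx' x).mul hφc).abs).intervalIntegrable _ _
    have i2 : IntervalIntegrable (fun y => M * φ y) volume 0 1 :=
      (continuous_const.mul hφc).intervalIntegrable _ _
    calc |∫ y in (0:ℝ)..1, h' x y * φ y|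
        ≤ ∫ y in (0:ℝ)..1, |h' x y * φ y| :=
          intervalIntegral.abs_integral_le_integral_abs zero_le_one
      _ ≤ ∫ y in (0:ℝ)..1, M * φ y := by
          refine intervalIntegral.integral_mono_on zero_le_one i1 i2 fun y _ => ?_
          rw [abs_mul, abs_of_nonneg (hφn y)]
          exact mul_le_mul_of_nonneg_right (hM x y) (hφn y)
      _ = M := by rw [intervalIntegral.integral_const_mul, hφi, mul_one]
  -- difference bound
  have hDd : ∀ x, |(∫ y in (0:ℝ)..1, h' x y * φ₁ y) - ∫ y in (0:ℝ)..1, h' x y * φ₂ y|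
      ≤ M * S := by
    intro x
    have i1 : IntervalIntegrable (fun y => h' x y * φ₁ y) volume 0 1 :=
      ((hcontx' x).mul hc1).intervalIntegrable _ _
    have i2 : IntervalIntegrable (fun y => h' x y * φ₂ y) volume 0 1 :=
      ((hcontx' x).mul hc2).intervalIntegrable _ _
    have e : (∫ y in (0:ℝ)..1, h' x y * φ₁ y) - ∫ y in (0:ℝ)..1, h' x y * φ₂ y
        = ∫ y in (0:ℝ)..1, h' x y * (φ₁ y - φ₂ y) := by
      rw [← intervalIntegral.integral_sub i1 i2]
      congr 1; funext y; ring
    have i3 : IntervalIntegrable (fun y => |h' x y * (φ₁ y - φ₂ y)|) volume 0 1 :=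
      (((hcontx' x).mul (hc1.sub hc2)).abs).intervalIntegrable _ _
    calc |(∫ y in (0:ℝ)..1, h' x y * φ₁ y) - ∫ y in (0:ℝ)..1, h' x y * φ₂ y|
        = |∫ y in (0:ℝ)..1, h' x y * (φ₁ y - φ₂ y)| := by rw [e]
      _ ≤ ∫ y in (0:ℝ)..1, |h' x y * (φ₁ y - φ₂ y)| :=
          intervalIntegral.abs_integral_le_integral_abs zero_le_one
      _ ≤ ∫ _y in (0:ℝ)..1, M * S := by
          refine intervalIntegral.integral_mono_on zero_le_one i3
            (intervalIntegrable_const) fun y _ => ?_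
          rw [abs_mul]
          exact mul_le_mul (hM x y) (hS y) (abs_nonneg _) hM0
      _ = M * S := by simp
  -- derivative of gmap
  have hg : ∀ φ : ℝ → ℝ, Continuous φ → (∀ t, 0 ≤ φ t) → ∀ x : ℝ,
      deriv (gmap h ε φ) x = 1 + ε * ∫ y in (0:ℝ)..1, h' x y * φ y := by
    intro φ hφc hφn x
    have : HasDerivAt (gmap h ε φ) (1 + ε * ∫ y in (0:ℝ)..1, h' x y * φ y) x := by
      unfold gmap
      exact (hasDerivAt_id x).add ((key φ hφc hφn x).const_mul ε)
    exact this.deriv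
  have hRHS0 : 0 ≤ 4 * M * |ε| * S :=
    mul_nonneg (mul_nonneg (by linarith) (abs_nonneg ε)) hS0
  refine Real.iSup_le (fun x => ?_) hRHS0
  rw [hg φ₁ hc1 hn1 x, hg φ₂ hc2 hn2 x]
  set A : ℝ := ∫ y in (0:ℝ)..1, h' x y * φ₁ y with hA
  set B : ℝ := ∫ y in (0:ℝ)..1, h' x y * φ₂ y with hB
  have hA1 : |A| ≤ M := by rw [hA]; exact hDb φ₁ hc1 hn1 hi1 x
  have hB1 : |B| ≤ M := by rw [hB]; exact hDb φ₂ hc2 hn2 hi2 x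
  have hAB : |A - B| ≤ M * S := by rw [hA, hB]; exact hDd x
  have hεM : |ε| * M ≤ 1 / 2 := by
    have h1 : |ε| * M ≤ 1 / (2 * (M + 1)) * M := mul_le_mul_of_nonneg_right hε hM0
    have h2 : 1 / (2 * (M + 1)) * M ≤ 1 / 2 := by
      rw [div_mul_eq_mul_div, div_le_div_iff₀ (by positivity) (by norm_num)]
      nlinarith
    linarith
  have ha : 1 / 2 ≤ 1 + ε * A := by
    have h1 : |ε * A| ≤ 1 / 2 := by
      rw [abs_mul]
      calc |ε| * |A| ≤ |ε| * M := mul_le_mul_of_nonneg_left hA1 (abs_nonneg ε)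
        _ ≤ 1 / 2 := hεM
    have := neg_abs_le (ε * A); linarith
  have hb : 1 / 2 ≤ 1 + ε * B := by
    have h1 : |ε * B| ≤ 1 / 2 := by
      rw [abs_mul]
      calc |ε| * |B| ≤ |ε| * M := mul_le_mul_of_nonneg_left hB1 (abs_nonneg ε)
        _ ≤ 1 / 2 := hεM
    have := neg_abs_le (ε * B); linarith
  have ha0 : (1 : ℝ) + ε * A ≠ 0 := by linarith
  have hb0 : (1 : ℝ) + ε * B ≠ 0 := by linarith
  have hprod : (1 : ℝ) / 4 ≤ (1 + ε * A) * (1 + ε * B) := by nlinarith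
  have hprodpos : (0 : ℝ) < (1 + ε * A) * (1 + ε * B) := lt_of_lt_of_le (by norm_num) hprod
  have key2 : 1 / (1 + ε * A) - 1 / (1 + ε * B)
      = ((1 + ε * B) - (1 + ε * A)) / ((1 + ε * A) * (1 + ε * B)) := by
    rw [div_sub_div _ _ ha0 hb0]; ring_nf
  rw [key2, abs_div, abs_of_pos hprodpos]
  have hnum : |(1 + ε * B) - (1 + ε * A)| ≤ |ε| * (M * S) := by
    have e : (1 + ε * B) - (1 + ε * A) = ε * (B - A) := by ring
    rw [e, abs_mul]
    refine mul_le_mul_of_nonneg_left ?_ (abs_nonneg ε)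
    rw [abs_sub_comm]; exact hAB
  rw [div_le_iff₀ hprodpos]
  nlinarith [abs_nonneg ((1 + ε * B) - (1 + ε * A)),
    mul_nonneg (mul_nonneg (abs_nonneg ε) hM0) hS0]
end
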